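/- Fix d ≥ 1, m ≥ 1, an integer k ≥ 1 and n = km. If the environment variables ω(i,y) and the m-tree environment copies ω^u(j,y) are i.i.d. standard Gaussian, then the maximal polymer energy is stochastically dominated by the maximal m-tree energy: for every t ∈ ℝ, ℙ(max_{x∈Π_n} H_n(x) > t) ≤ ℙ(max_{x∈Π_n} H_n^{m-tree}(x) > t). -/

import Mathlib

open MeasureTheory ProbabilityTheory Real Finset

noncomputable section

/-- A nearest-neighbour step of the simple random walk on `ℤ^d`, encoded by a
coordinate direction and a sign. -/
def step (d : ℕ) (s : Fin d × Bool) : Fin d → ℤ :=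
  fun j => if j = s.1 then (if s.2 then 1 else -1) else 0

/-- Position after `i` steps of the nearest-neighbour path (started at the origin)
with step sequence `s`.  Nearest-neighbour paths in `Π_n` (starting at `0`) are
identified with their step sequences `s : Fin n → Fin d × Bool`. -/
def pos {d n : ℕ} (s : Fin n → Fin d × Bool) (i : ℕ) : Fin d → ℤ :=
  ∑ j ∈ Finset.univ.filter (fun j : Fin n => (j : ℕ) < i), step d (s j)

/-- The polymer energy `H_n(x) = ∑_{i=1}^n ω(i, x_i)`. -/
def polymerEnergy {Ω : Type*} {d : ℕ} (n : ℕ) (env : ℕ × (Fin d → ℤ) → Ω → ℝ)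
    (s : Fin n → Fin d × Bool) (o : Ω) : ℝ :=
  ∑ i ∈ Finset.range n, env (i + 1, pos s (i + 1)) o

/-- The `(x_m, x_{2m}, …, x_{lm})` word indexing the environment block used by the
path `s` in the `l`-th block of the `m`-tree. -/
def treeWord {d n : ℕ} (m : ℕ) (s : Fin n → Fin d × Bool) (l : ℕ) : List (Fin d → ℤ) :=
  List.ofFn (fun r : Fin l => pos s ((r + 1) * m))

/-- The `m`-tree energy `H_n^{m-tree}(x)`, for `n = k m`:
`∑_{l=0}^{k-1} ∑_{j=1}^{m} ω^{(x_m, …, x_{lm})}(j, x_{lm+j} − x_{lm})`. -/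
def treeEnergy {Ω : Type*} {d : ℕ} (n m k : ℕ)
    (envT : List (Fin d → ℤ) × ℕ × (Fin d → ℤ) → Ω → ℝ)
    (s : Fin n → Fin d × Bool) (o : Ω) : ℝ :=
  ∑ l ∈ Finset.range k, ∑ j ∈ Finset.range m,
    envT (treeWord m s l, (j + 1, pos s (l * m + (j + 1)) - pos s (l * m))) o

/-- An i.i.d. family with common law `ν`: measurable, jointly independent,
identically distributed. -/
def IID {Ω ι : Type*} [MeasurableSpace Ω] (μ : Measure Ω) (f : ι → Ω → ℝ) (ν : Measure ℝ) : Prop :=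
  (∀ i, Measurable (f i)) ∧ iIndepFun f μ ∧ ∀ i, Measure.map (f i) μ = ν


section Util

variable {ν : Measure ℝ} [IsProbabilityMeasure ν]

/-- U1: an injectively re-indexed finite subfamily of an IID family has law `Measure.pi`. -/
lemma map_iid_pi {Ω κ T : Type*} [MeasurableSpace Ω] [Fintype T]
    (μ : Measure Ω) [IsProbabilityMeasure μ] (f : κ → Ω → ℝ) (hf : IID μ f ν)
    (ρ : T → κ) (hρ : Function.Injective ρ) :
    μ.map (fun o (i : T) => f (ρ i) o) = Measure.pi (fun _ : T => ν) := by
  classical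
  refine (Measure.pi_eq fun s hs => ?_).symm
  have hX : Measurable (fun o (i : T) => f (ρ i) o) :=
    measurable_pi_lambda _ fun i => hf.1 (ρ i)
  rw [Measure.map_apply hX (MeasurableSet.univ_pi hs)]
  set sets : κ → Set ℝ := Function.extend ρ s (fun _ => Set.univ) with hsets
  have hext : ∀ i : T, sets (ρ i) = s i := fun i => hρ.extend_apply _ _ _
  have hpre : (fun o (i : T) => f (ρ i) o) ⁻¹' (Set.pi Set.univ s)
      = ⋂ j ∈ Finset.image ρ Finset.univ, f j ⁻¹' sets j := by
    ext o
    simp only [Set.mem_preimage, Set.mem_pi, Set.mem_univ, forall_true_left, Set.mem_iInter,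
      Finset.mem_image, Finset.mem_univ, true_and]
    constructor
    · rintro h j ⟨i, rfl⟩
      simpa [hext i] using h i
    · intro h i
      have := h (ρ i) ⟨i, rfl⟩
      simpa [hext i] using this
  have hmeas : ∀ j ∈ Finset.image ρ Finset.univ, MeasurableSet (sets j) := by
    intro j hj
    rcases Finset.mem_image.1 hj with ⟨i, _, rfl⟩
    rw [hext i]; exact hs i
  rw [hpre, hf.2.1.measure_inter_preimage_eq_mul _ hmeas,
    Finset.prod_image (fun i _ j _ h => hρ h)]
  refine Finset.prod_congr rfl fun i _ => ?_
  rw [hext i, ← hf.2.2 (ρ i), Measure.map_apply (hf.1 (ρ i)) (hs i)]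

/-- U2: marginal of a product measure along an injection between index types. -/
lemma map_comp_pi {T T' : Type*} [Fintype T] [Fintype T']
    (σ : T' → T) (hσ : Function.Injective σ) :
    Measure.map (fun x : T → ℝ => x ∘ σ) (Measure.pi fun _ : T => ν)
      = Measure.pi (fun _ : T' => ν) := by
  classical
  refine (Measure.pi_eq fun s hs => ?_).symm
  have hm : Measurable (fun x : T → ℝ => x ∘ σ) :=
    measurable_pi_lambda _ fun i => measurable_pi_apply (σ i)
  rw [Measure.map_apply hm (MeasurableSet.univ_pi hs)]
  set sets : T → Set ℝ := Function.extend σ s (fun _ => Set.univ) with hsets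
  have hext : ∀ i : T', sets (σ i) = s i := fun i => hσ.extend_apply _ _ _
  have hpre : (fun x : T → ℝ => x ∘ σ) ⁻¹' (Set.pi Set.univ s) = Set.pi Set.univ sets := by
    ext x
    simp only [Set.mem_preimage, Set.mem_pi, Set.mem_univ, forall_true_left, Function.comp]
    constructor
    · intro h j
      by_cases hj : ∃ i, σ i = j
      · rcases hj with ⟨i, rfl⟩; rw [hext i]; exact h i
      · rw [hsets, Function.extend_def, dif_neg hj]; trivial
    · intro h i
      have := h (σ i); rwa [hext i] at this
  rw [hpre, Measure.pi_pi]
  rw [show (Finset.univ : Finset T) = Finset.univ from rfl]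
  have h1 : ∀ j ∈ (Finset.univ : Finset T), j ∉ Finset.image σ Finset.univ → ν (sets j) = 1 := by
    intro j _ hj
    have hj' : ¬∃ i, σ i = j := by
      intro ⟨i, hi⟩; exact hj (Finset.mem_image.2 ⟨i, Finset.mem_univ _, hi⟩)
    rw [hsets, Function.extend_def, dif_neg hj']
    simp
  calc ∏ j : T, ν (sets j)
      = ∏ j ∈ Finset.image σ Finset.univ, ν (sets j) :=
        (Finset.prod_subset (Finset.subset_univ _) h1).symm
    _ = ∏ i : T', ν (sets (σ i)) := Finset.prod_image (fun i _ j _ h => hσ h)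
    _ = ∏ i : T', ν (s i) := Finset.prod_congr rfl fun i _ => by rw [hext i]

lemma pi_comp_apply {T T' : Type*} [Fintype T] [Fintype T']
    (σ : T' → T) (hσ : Function.Injective σ) {s : Set (T' → ℝ)} (hs : MeasurableSet s) :
    (Measure.pi fun _ : T => ν) ((fun x : T → ℝ => x ∘ σ) ⁻¹' s)
      = (Measure.pi fun _ : T' => ν) s := by
  rw [← map_comp_pi (ν := ν) σ hσ, Measure.map_apply _ hs]
  exact measurable_pi_lambda _ fun i => measurable_pi_apply (σ i)

lemma lintegral_comp_pi {T T' : Type*} [Fintype T] [Fintype T']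
    (σ : T' → T) (hσ : Function.Injective σ) {H : (T' → ℝ) → ENNReal} (hH : Measurable H) :
    ∫⁻ x, H (x ∘ σ) ∂(Measure.pi fun _ : T => ν)
      = ∫⁻ y, H y ∂(Measure.pi fun _ : T' => ν) := by
  rw [← map_comp_pi (ν := ν) σ hσ, lintegral_map hH]
  exact measurable_pi_lambda _ fun i => measurable_pi_apply (σ i)

/-- U3: events depending on disjoint coordinate blocks of a product measure are independent. -/
lemma pi_prod_blocks {γ τ : Type*} [Fintype γ] [Fintype τ]
    (C : γ → Set (τ → ℝ)) (hC : ∀ z, MeasurableSet (C z)) :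
    (Measure.pi fun _ : γ × τ => ν) (⋂ z : γ, {x : γ × τ → ℝ | (fun v => x (z, v)) ∈ C z})
      = ∏ z : γ, (Measure.pi fun _ : τ => ν) (C z) := by
  classical
  set Φ : (γ × τ → ℝ) → (γ → τ → ℝ) := fun x z v => x (z, v) with hΦdef
  have hΦ : Measurable Φ :=
    measurable_pi_lambda _ fun z => measurable_pi_lambda _ fun v => measurable_pi_apply (z, v)
  have hmap : Measure.pi (fun _ : γ => (Measure.pi fun _ : τ => ν))
      = Measure.map Φ (Measure.pi fun _ : γ × τ => ν) := by
    refine Measure.pi_eq_generateFrom (fun _ => generateFrom_pi) (fun _ => isPiSystem_pi)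
      (fun _ => ?_) (fun S hS => ?_)
    · exact
        { set := fun _ => Set.pi Set.univ (fun _ : τ => Set.univ)
          set_mem := fun _ => ⟨fun _ => Set.univ, fun _ _ => Set.mem_setOf.2 MeasurableSet.univ, rfl⟩
          finite := fun _ => by simp
          spanning := by simp [Set.iUnion_const] }
    · choose s hsmeas hseq using fun z => hS z
      have hseq' : ∀ z, S z = Set.pi Set.univ (s z) := fun z => (hseq z).symm
      have hpre : Φ ⁻¹' (Set.pi Set.univ S) = Set.pi Set.univ (fun p : γ × τ => s p.1 p.2) := by
        ext x
        simp only [Set.mem_preimage, Set.mem_pi, Set.mem_univ, forall_true_left, Prod.forall]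
        constructor
        · intro h z v
          have := h z; rw [hseq' z] at this
          exact this v (Set.mem_univ v)
        · intro h z
          rw [hseq' z]; intro v _; exact h z v
      rw [Measure.map_apply hΦ, hpre, Measure.pi_pi, Fintype.prod_prod_type]
      · refine Finset.prod_congr rfl fun z _ => ?_
        rw [hseq' z, Measure.pi_pi]
      · refine MeasurableSet.univ_pi fun z => ?_
        rw [hseq' z]
        exact MeasurableSet.univ_pi fun v => (hsmeas z) v (Set.mem_univ v)
  have hpre2 : (⋂ z : γ, {x : γ × τ → ℝ | (fun v => x (z, v)) ∈ C z})
      = Φ ⁻¹' (Set.pi Set.univ C) := by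
    ext x; simp [Set.mem_pi, hΦdef]
  rw [hpre2, ← Measure.map_apply hΦ (MeasurableSet.univ_pi hC), ← hmap, Measure.pi_pi]

end Util

section Harris

/-- Integrability of `[0,1]`-valued measurable functions on a probability space. -/
lemma integrable_of_zero_one {α : Type*} [MeasurableSpace α] {μ : Measure α}
    [IsProbabilityMeasure μ] {f : α → ℝ} (hf : Measurable f)
    (h0 : ∀ x, 0 ≤ f x) (h1 : ∀ x, f x ≤ 1) : Integrable f μ := by
  refine (integrable_const (1 : ℝ)).mono' hf.aestronglyMeasurable ?_
  filter_upwards with x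
  rw [Real.norm_eq_abs, abs_le]
  exact ⟨by linarith [h0 x], h1 x⟩

/-- The Harris property of a measure (for antitone `[0,1]`-valued functions). -/
def HarrisMeasure {α : Type*} [MeasurableSpace α] [Preorder α] (μ : Measure α) : Prop :=
  ∀ f g : α → ℝ, Measurable f → Measurable g → Antitone f → Antitone g →
    (∀ x, 0 ≤ f x) → (∀ x, f x ≤ 1) → (∀ x, 0 ≤ g x) → (∀ x, g x ≤ 1) →
    (∫ x, f x ∂μ) * ∫ x, g x ∂μ ≤ ∫ x, f x * g x ∂μ

/-- Harris inequality, one-dimensional case. -/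
lemma harris_R (μ : Measure ℝ) [IsProbabilityMeasure μ] : HarrisMeasure μ := by
  intro f g hfm hgm hfa hga hf0 hf1 hg0 hg1
  have hint : ∀ (F G : ℝ → ℝ), Measurable F → Measurable G → (∀ x, 0 ≤ F x) → (∀ x, F x ≤ 1) →
      (∀ x, 0 ≤ G x) → (∀ x, G x ≤ 1) →
      Integrable (fun z : ℝ × ℝ => F z.1 * G z.2) (μ.prod μ) := by
    intro F G hF hG hF0 hF1 hG0 hG1
    exact integrable_of_zero_one ((hF.comp measurable_fst).mul (hG.comp measurable_snd))
      (fun z => mul_nonneg (hF0 _) (hG0 _))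
      (fun z => mul_le_one₀ (hF1 _) (hG0 _) (hG1 _))
  have hfg0 : ∀ x, 0 ≤ f x * g x := fun x => mul_nonneg (hf0 x) (hg0 x)
  have hfg1 : ∀ x, f x * g x ≤ 1 := fun x => mul_le_one₀ (hf1 x) (hg0 x) (hg1 x)
  have h11 : Integrable (fun z : ℝ × ℝ => f z.1 * g z.1) (μ.prod μ) :=
    integrable_of_zero_one ((hfm.comp measurable_fst).mul (hgm.comp measurable_fst))
      (fun z => hfg0 _) (fun z => hfg1 _)
  have h22 : Integrable (fun z : ℝ × ℝ => f z.2 * g z.2) (μ.prod μ) :=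
    integrable_of_zero_one ((hfm.comp measurable_snd).mul (hgm.comp measurable_snd))
      (fun z => hfg0 _) (fun z => hfg1 _)
  have h12 : Integrable (fun z : ℝ × ℝ => f z.1 * g z.2) (μ.prod μ) :=
    hint f g hfm hgm hf0 hf1 hg0 hg1
  have h21 : Integrable (fun z : ℝ × ℝ => g z.1 * f z.2) (μ.prod μ) :=
    hint g f hgm hfm hg0 hg1 hf0 hf1
  have key : 0 ≤ ∫ z : ℝ × ℝ, ((f z.1 * g z.1 + f z.2 * g z.2)
      - (f z.1 * g z.2 + g z.1 * f z.2)) ∂(μ.prod μ) := by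
    refine integral_nonneg fun z => ?_
    show (0:ℝ) ≤ (f z.1 * g z.1 + f z.2 * g z.2) - (f z.1 * g z.2 + g z.1 * f z.2)
    have expand : (f z.1 * g z.1 + f z.2 * g z.2) - (f z.1 * g z.2 + g z.1 * f z.2)
        = (f z.1 - f z.2) * (g z.1 - g z.2) := by ring
    rw [expand]
    rcases le_total z.1 z.2 with h | h
    · have h1 : f z.2 ≤ f z.1 := hfa h
      have h2 : g z.2 ≤ g z.1 := hga h
      exact mul_nonneg (by linarith) (by linarith)
    · have h1 : f z.1 ≤ f z.2 := hfa h
      have h2 : g z.1 ≤ g z.2 := hga h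
      nlinarith
  have e0 : ∫ z : ℝ × ℝ, ((f z.1 * g z.1 + f z.2 * g z.2)
        - (f z.1 * g z.2 + g z.1 * f z.2)) ∂(μ.prod μ)
      = ((∫ z : ℝ × ℝ, f z.1 * g z.1 ∂(μ.prod μ)) + ∫ z : ℝ × ℝ, f z.2 * g z.2 ∂(μ.prod μ))
        - ((∫ z : ℝ × ℝ, f z.1 * g z.2 ∂(μ.prod μ))
          + ∫ z : ℝ × ℝ, g z.1 * f z.2 ∂(μ.prod μ)) := by
    have ha : ∫ z : ℝ × ℝ, ((f z.1 * g z.1 + f z.2 * g z.2)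
          - (f z.1 * g z.2 + g z.1 * f z.2)) ∂(μ.prod μ)
        = (∫ z : ℝ × ℝ, (f z.1 * g z.1 + f z.2 * g z.2) ∂(μ.prod μ))
          - ∫ z : ℝ × ℝ, (f z.1 * g z.2 + g z.1 * f z.2) ∂(μ.prod μ) :=
      integral_sub (h11.add h22) (h12.add h21)
    have hb : ∫ z : ℝ × ℝ, (f z.1 * g z.1 + f z.2 * g z.2) ∂(μ.prod μ)
        = (∫ z : ℝ × ℝ, f z.1 * g z.1 ∂(μ.prod μ)) + ∫ z : ℝ × ℝ, f z.2 * g z.2 ∂(μ.prod μ) :=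
      integral_add h11 h22
    have hc : ∫ z : ℝ × ℝ, (f z.1 * g z.2 + g z.1 * f z.2) ∂(μ.prod μ)
        = (∫ z : ℝ × ℝ, f z.1 * g z.2 ∂(μ.prod μ)) + ∫ z : ℝ × ℝ, g z.1 * f z.2 ∂(μ.prod μ) :=
      integral_add h12 h21
    rw [ha, hb, hc]
  rw [e0] at key
  have e1 : ∫ z : ℝ × ℝ, f z.1 * g z.1 ∂(μ.prod μ) = ∫ x, f x * g x ∂μ := by
    rw [integral_prod _ h11]
    simp only [integral_const, measure_univ, Measure.real, ENNReal.toReal_one, smul_eq_mul, one_mul]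
  have e2 : ∫ z : ℝ × ℝ, f z.2 * g z.2 ∂(μ.prod μ) = ∫ x, f x * g x ∂μ := by
    rw [integral_prod _ h22]
    simp only [integral_const, measure_univ, Measure.real, ENNReal.toReal_one, smul_eq_mul, one_mul]
  have e3 : ∫ z : ℝ × ℝ, f z.1 * g z.2 ∂(μ.prod μ) = (∫ x, f x ∂μ) * ∫ x, g x ∂μ := by
    rw [integral_prod _ h12]
    simp_rw [integral_const_mul]
    rw [integral_mul_const]
  have e4 : ∫ z : ℝ × ℝ, g z.1 * f z.2 ∂(μ.prod μ) = (∫ x, f x ∂μ) * ∫ x, g x ∂μ := by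
    rw [integral_prod _ h21]
    simp_rw [integral_const_mul]
    rw [integral_mul_const, mul_comm]
  rw [e1, e2, e3, e4] at key
  linarith

lemma harris_step {α β : Type*} [MeasurableSpace α] [MeasurableSpace β]
    [Preorder α] [Preorder β] (μ : Measure α) (pb : Measure β)
    [IsProbabilityMeasure μ] [IsProbabilityMeasure pb]
    (Hα : HarrisMeasure μ) (Hβ : HarrisMeasure pb) : HarrisMeasure (μ.prod pb) := by
  intro F G hFm hGm hFa hGa hF0 hF1 hG0 hG1
  set F₁ : α → ℝ := fun a => ∫ b, F (a, b) ∂pb with hF₁def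
  set G₁ : α → ℝ := fun a => ∫ b, G (a, b) ∂pb with hG₁def
  have hF₁m : Measurable F₁ := hFm.stronglyMeasurable.integral_prod_right'.measurable
  have hG₁m : Measurable G₁ := hGm.stronglyMeasurable.integral_prod_right'.measurable
  have hintb : ∀ (H : α × β → ℝ), Measurable H → (∀ x, 0 ≤ H x) → (∀ x, H x ≤ 1) →
      ∀ a, Integrable (fun b => H (a, b)) pb := fun H hm h0 h1 a =>
    integrable_of_zero_one (hm.comp measurable_prodMk_left) (fun b => h0 _) (fun b => h1 _)
  have hF₁0 : ∀ a, 0 ≤ F₁ a := fun a => integral_nonneg fun b => hF0 _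
  have hF₁1 : ∀ a, F₁ a ≤ 1 := fun a => by
    calc F₁ a ≤ ∫ _, (1:ℝ) ∂pb := integral_mono (hintb F hFm hF0 hF1 a)
            (integrable_const 1) (fun b => hF1 _)
      _ = 1 := by simp
  have hG₁0 : ∀ a, 0 ≤ G₁ a := fun a => integral_nonneg fun b => hG0 _
  have hG₁1 : ∀ a, G₁ a ≤ 1 := fun a => by
    calc G₁ a ≤ ∫ _, (1:ℝ) ∂pb := integral_mono (hintb G hGm hG0 hG1 a)
            (integrable_const 1) (fun b => hG1 _)
      _ = 1 := by simp
  have hF₁a : Antitone F₁ := by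
    intro a a' haa'
    exact integral_mono (hintb F hFm hF0 hF1 a') (hintb F hFm hF0 hF1 a)
      (fun b => hFa (Prod.mk_le_mk.2 ⟨haa', le_rfl⟩))
  have hG₁a : Antitone G₁ := by
    intro a a' haa'
    exact integral_mono (hintb G hGm hG0 hG1 a') (hintb G hGm hG0 hG1 a)
      (fun b => hGa (Prod.mk_le_mk.2 ⟨haa', le_rfl⟩))
  have hFG : Integrable (fun z => F z * G z) (μ.prod pb) :=
    integrable_of_zero_one (hFm.mul hGm) (fun z => mul_nonneg (hF0 z) (hG0 z))
      (fun z => mul_le_one₀ (hF1 z) (hG0 z) (hG1 z))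
  have step1 : ∫ z, F z * G z ∂(μ.prod pb) = ∫ a, ∫ b, F (a,b) * G (a,b) ∂pb ∂μ := by
    rw [integral_prod _ hFG]
  have inner_ge : ∀ a, F₁ a * G₁ a ≤ ∫ b, F (a,b) * G (a,b) ∂pb := by
    intro a
    exact Hβ (fun b => F (a,b)) (fun b => G (a,b))
      (hFm.comp measurable_prodMk_left) (hGm.comp measurable_prodMk_left)
      (fun b b' h => hFa (Prod.mk_le_mk.2 ⟨le_rfl, h⟩))
      (fun b b' h => hGa (Prod.mk_le_mk.2 ⟨le_rfl, h⟩))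
      (fun b => hF0 _) (fun b => hF1 _) (fun b => hG0 _) (fun b => hG1 _)
  have step2 : ∫ a, F₁ a * G₁ a ∂μ ≤ ∫ a, ∫ b, F (a,b) * G (a,b) ∂pb ∂μ := by
    refine integral_mono ?_ ?_ inner_ge
    · exact integrable_of_zero_one (hF₁m.mul hG₁m)
        (fun a => mul_nonneg (hF₁0 a) (hG₁0 a))
        (fun a => mul_le_one₀ (hF₁1 a) (hG₁0 a) (hG₁1 a))
    · refine integrable_of_zero_one
        ((hFm.mul hGm).stronglyMeasurable.integral_prod_right'.measurable ) ?_ ?_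
      · exact fun a => integral_nonneg fun b => mul_nonneg (hF0 _) (hG0 _)
      · intro a
        calc (∫ b, F (a,b) * G (a,b) ∂pb) ≤ ∫ _, (1:ℝ) ∂pb :=
            integral_mono (hintb _ (hFm.mul hGm)
              (fun z => mul_nonneg (hF0 z) (hG0 z))
              (fun z => mul_le_one₀ (hF1 z) (hG0 z) (hG1 z)) a)
              (integrable_const 1)
              (fun b => mul_le_one₀ (hF1 _) (hG0 _) (hG1 _))
          _ = 1 := by simp
  have step3 : (∫ a, F₁ a ∂μ) * (∫ a, G₁ a ∂μ) ≤ ∫ a, F₁ a * G₁ a ∂μ :=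
    Hα F₁ G₁ hF₁m hG₁m hF₁a hG₁a hF₁0 hF₁1 hG₁0 hG₁1
  have eqF : ∫ z, F z ∂(μ.prod pb) = ∫ a, F₁ a ∂μ := by
    rw [integral_prod _ (integrable_of_zero_one hFm hF0 hF1)]
  have eqG : ∫ z, G z ∂(μ.prod pb) = ∫ a, G₁ a ∂μ := by
    rw [integral_prod _ (integrable_of_zero_one hGm hG0 hG1)]
  calc (∫ z, F z ∂(μ.prod pb)) * ∫ z, G z ∂(μ.prod pb)
      = (∫ a, F₁ a ∂μ) * ∫ a, G₁ a ∂μ := by rw [eqF, eqG]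
    _ ≤ ∫ a, F₁ a * G₁ a ∂μ := step3
    _ ≤ ∫ a, ∫ b, F (a,b) * G (a,b) ∂pb ∂μ := step2
    _ = ∫ z, F z * G z ∂(μ.prod pb) := step1.symm

lemma harris_fin (ν : Measure ℝ) [IsProbabilityMeasure ν] :
    ∀ N : ℕ, HarrisMeasure (Measure.pi (fun _ : Fin N => ν)) := by
  intro N
  induction N with
  | zero =>
    intro f g hfm hgm hfa hga hf0 hf1 hg0 hg1
    have hconst : ∀ x : Fin 0 → ℝ, x = fun i => i.elim0 := fun x => funext fun i => i.elim0
    have hf : f = fun _ => f (fun i => i.elim0) := funext fun x => by rw [hconst x]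
    have hg : g = fun _ => g (fun i => i.elim0) := funext fun x => by rw [hconst x]
    rw [hf, hg]
    simp [integral_const]
  | succ N IH =>
    set e := MeasurableEquiv.piFinSuccAbove (fun _ : Fin (N+1) => ℝ) 0 with hedef
    have mp : MeasurePreserving (⇑e) (Measure.pi fun _ : Fin (N+1) => ν)
        (ν.prod (Measure.pi fun _ : Fin N => ν)) :=
      measurePreserving_piFinSuccAbove (fun _ : Fin (N+1) => ν) 0
    have hsymm_mono : Monotone (⇑e.symm) := by
      intro p q hpq
      have hp : e.symm p = Fin.insertNth 0 p.1 p.2 := rfl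
      have hq : e.symm q = Fin.insertNth 0 q.1 q.2 := rfl
      rw [hp, hq, Fin.insertNth_le_iff]
      refine ⟨?_, fun j => ?_⟩
      · rw [Fin.insertNth_apply_same]; exact hpq.1
      · simp only [Fin.insertNth_apply_succAbove]; exact hpq.2 j
    intro f g hfm hgm hfa hga hf0 hf1 hg0 hg1
    have prodH : HarrisMeasure (ν.prod (Measure.pi fun _ : Fin N => ν)) :=
      harris_step ν _ (harris_R ν) IH
    have hcomp := prodH (f ∘ ⇑e.symm) (g ∘ ⇑e.symm)
      (hfm.comp e.symm.measurable) (hgm.comp e.symm.measurable)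
      (hfa.comp_monotone hsymm_mono) (hga.comp_monotone hsymm_mono)
      (fun x => hf0 _) (fun x => hf1 _) (fun x => hg0 _) (fun x => hg1 _)
    have mps : MeasurePreserving (⇑e.symm) (ν.prod (Measure.pi fun _ : Fin N => ν))
        (Measure.pi fun _ : Fin (N+1) => ν) := mp.symm e
    have c1 : ∫ z, (f ∘ ⇑e.symm) z ∂(ν.prod (Measure.pi fun _ : Fin N => ν))
        = ∫ x, f x ∂(Measure.pi fun _ : Fin (N+1) => ν) := mps.integral_comp' f
    have c2 : ∫ z, (g ∘ ⇑e.symm) z ∂(ν.prod (Measure.pi fun _ : Fin N => ν))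
        = ∫ x, g x ∂(Measure.pi fun _ : Fin (N+1) => ν) := mps.integral_comp' g
    have c3 : ∫ z, ((f ∘ ⇑e.symm) z) * ((g ∘ ⇑e.symm) z)
          ∂(ν.prod (Measure.pi fun _ : Fin N => ν))
        = ∫ x, f x * g x ∂(Measure.pi fun _ : Fin (N+1) => ν) := mps.integral_comp' (f * g)
    simp only [Function.comp] at hcomp c1 c2 c3
    rw [c1, c2, c3] at hcomp
    exact hcomp

lemma harris_fintype (ν : Measure ℝ) [IsProbabilityMeasure ν] (ι : Type*) [Fintype ι] :
    HarrisMeasure (Measure.pi (fun _ : ι => ν)) := by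
  classical
  set E := Fintype.equivFin ι with hE
  set Ψ := MeasurableEquiv.piCongrLeft (fun _ : ι => ℝ) E.symm with hΨ
  have hmp : MeasurePreserving (⇑Ψ)
      (Measure.pi fun _ : Fin (Fintype.card ι) => ν) (Measure.pi fun _ : ι => ν) :=
    measurePreserving_piCongrLeft (fun _ : ι => ν) E.symm
  have hΨmono : Monotone (⇑Ψ) := by
    intro x y h i
    rw [hΨ, MeasurableEquiv.coe_piCongrLeft]
    obtain ⟨i', rfl⟩ : ∃ i', E.symm i' = i := ⟨E i, by simp⟩
    rw [Equiv.piCongrLeft_apply_apply, Equiv.piCongrLeft_apply_apply]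
    exact h i'
  intro f g hfm hgm hfa hga hf0 hf1 hg0 hg1
  have hmain := harris_fin ν (Fintype.card ι) (f ∘ ⇑Ψ) (g ∘ ⇑Ψ)
    (hfm.comp Ψ.measurable) (hgm.comp Ψ.measurable)
    (hfa.comp_monotone hΨmono) (hga.comp_monotone hΨmono)
    (fun x => hf0 _) (fun x => hf1 _) (fun x => hg0 _) (fun x => hg1 _)
  have c1 : ∫ z, (f ∘ ⇑Ψ) z ∂(Measure.pi fun _ : Fin (Fintype.card ι) => ν)
      = ∫ x, f x ∂(Measure.pi fun _ : ι => ν) := hmp.integral_comp' f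
  have c2 : ∫ z, (g ∘ ⇑Ψ) z ∂(Measure.pi fun _ : Fin (Fintype.card ι) => ν)
      = ∫ x, g x ∂(Measure.pi fun _ : ι => ν) := hmp.integral_comp' g
  have c3 : ∫ z, ((f ∘ ⇑Ψ) z) * ((g ∘ ⇑Ψ) z) ∂(Measure.pi fun _ : Fin (Fintype.card ι) => ν)
      = ∫ x, f x * g x ∂(Measure.pi fun _ : ι => ν) := hmp.integral_comp' (f * g)
  simp only [Function.comp] at hmain c1 c2 c3
  rw [c1, c2] at hmain
  exact le_trans hmain (le_of_eq c3)

/-- Harris inequality for finitely many decreasing events. -/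
lemma harris_sets (ν : Measure ℝ) [IsProbabilityMeasure ν] {ι γ : Type*} [Fintype ι]
    (G : Finset γ) (A : γ → Set (ι → ℝ)) (hA : ∀ z, MeasurableSet (A z))
    (hdec : ∀ z, ∀ ⦃x y : ι → ℝ⦄, x ≤ y → y ∈ A z → x ∈ A z) :
    ∏ z ∈ G, (Measure.pi fun _ : ι => ν) (A z)
      ≤ (Measure.pi fun _ : ι => ν) (⋂ z ∈ G, A z) := by
  classical
  set P := (Measure.pi fun _ : ι => ν) with hP
  induction G using Finset.cons_induction with
  | empty => simp
  | cons a G ha IH =>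
    have hSmeas : MeasurableSet (⋂ z ∈ G, A z) :=
      MeasurableSet.biInter (Finset.countable_toSet G) (fun z _ => hA z)
    have hindf : ∀ (S : Set (ι → ℝ)), (∀ ⦃x y : ι → ℝ⦄, x ≤ y → y ∈ S → x ∈ S) →
        Antitone (S.indicator (1 : (ι → ℝ) → ℝ)) := by
      intro S hS x y hxy
      by_cases hy : y ∈ S
      · have hx : x ∈ S := hS hxy hy
        simp [Set.indicator_of_mem, hx, hy]
      · simp only [Set.indicator_of_notMem hy]
        by_cases hx : x ∈ S <;> simp [hx]
    have hdecS : ∀ ⦃x y : ι → ℝ⦄, x ≤ y → y ∈ ⋂ z ∈ G, A z → x ∈ ⋂ z ∈ G, A z := by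
      intro x y hxy hy
      simp only [Set.mem_iInter] at hy ⊢
      exact fun z hz => hdec z hxy (hy z hz)
    have hind01 : ∀ (S : Set (ι → ℝ)) (x : ι → ℝ), 0 ≤ S.indicator (1 : (ι → ℝ) → ℝ) x ∧
        S.indicator (1 : (ι → ℝ) → ℝ) x ≤ 1 := by
      intro S x
      by_cases hx : x ∈ S <;> simp [hx]
    have hh := harris_fintype ν ι
      ((⋂ z ∈ G, A z).indicator (1 : (ι → ℝ) → ℝ)) ((A a).indicator (1 : (ι → ℝ) → ℝ))
      (measurable_const.indicator hSmeas) (measurable_const.indicator (hA a))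
      (hindf _ hdecS) (hindf _ (hdec a))
      (fun x => (hind01 _ x).1) (fun x => (hind01 _ x).2)
      (fun x => (hind01 _ x).1) (fun x => (hind01 _ x).2)
    have hmul : ∀ x, (⋂ z ∈ G, A z).indicator (1 : (ι → ℝ) → ℝ) x
        * (A a).indicator (1 : (ι → ℝ) → ℝ) x
        = ((A a) ∩ ⋂ z ∈ G, A z).indicator (1 : (ι → ℝ) → ℝ) x := by
      intro x
      by_cases h1 : x ∈ ⋂ z ∈ G, A z <;> by_cases h2 : x ∈ A a <;>
        simp [h1, h2, Set.indicator_of_mem, Set.indicator_of_notMem, Set.mem_inter_iff]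
    rw [integral_indicator_one hSmeas, integral_indicator_one (hA a)] at hh
    have hh2 : (P (⋂ z ∈ G, A z)).toReal * (P (A a)).toReal
        ≤ (P ((A a) ∩ ⋂ z ∈ G, A z)).toReal := by
      calc (P (⋂ z ∈ G, A z)).toReal * (P (A a)).toReal
          ≤ ∫ x, (⋂ z ∈ G, A z).indicator (1 : (ι → ℝ) → ℝ) x
              * (A a).indicator (1 : (ι → ℝ) → ℝ) x ∂P := hh
        _ = ∫ x, ((A a) ∩ ⋂ z ∈ G, A z).indicator (1 : (ι → ℝ) → ℝ) x ∂P := by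
              refine integral_congr_ae (Filter.Eventually.of_forall fun x => hmul x)
        _ = (P ((A a) ∩ ⋂ z ∈ G, A z)).toReal :=
              integral_indicator_one ((hA a).inter hSmeas)
    have hIHr : ∏ z ∈ G, (P (A z)).toReal ≤ (P (⋂ z ∈ G, A z)).toReal := by
      have := ENNReal.toReal_mono (measure_ne_top P _) IH
      rwa [ENNReal.toReal_prod] at this
    have hfinal_r : (P (A a)).toReal * ∏ z ∈ G, (P (A z)).toReal
        ≤ (P ((A a) ∩ ⋂ z ∈ G, A z)).toReal := by
      calc (P (A a)).toReal * ∏ z ∈ G, (P (A z)).toReal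
          ≤ (P (A a)).toReal * (P (⋂ z ∈ G, A z)).toReal :=
            mul_le_mul_of_nonneg_left hIHr ENNReal.toReal_nonneg
        _ = (P (⋂ z ∈ G, A z)).toReal * (P (A a)).toReal := mul_comm _ _
        _ ≤ _ := hh2
    rw [Finset.prod_cons]
    rw [Finset.cons_eq_insert, Finset.set_biInter_insert]
    rw [← ENNReal.toReal_le_toReal ?hfin1 (measure_ne_top P _)]
    · rwa [ENNReal.toReal_mul, ENNReal.toReal_prod]
    case hfin1 =>
      exact ENNReal.mul_ne_top (measure_ne_top P _)
        (by
          refine ENNReal.prod_ne_top ?_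
          intro z _
          exact (measure_ne_top P _))

end Harris

section Models

/-- Integer clamp to `[-R, R]`. -/
def clampZ (R : ℕ) (t : ℤ) : ℤ := max (-(R:ℤ)) (min (R:ℤ) t)

lemma clampZ_of_abs_le {R : ℕ} {t : ℤ} (h : |t| ≤ (R:ℤ)) : clampZ R t = t := by
  rw [abs_le] at h
  unfold clampZ
  omega

/-- The box `[-R,R]^d` as a finite type. -/
def BoxT (d R : ℕ) : Type := Fin d → (Finset.Icc (-(R:ℤ)) (R:ℤ))

instance (d R : ℕ) : Fintype (BoxT d R) := by unfold BoxT; infer_instance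
instance (d R : ℕ) : DecidableEq (BoxT d R) := by unfold BoxT; exact inferInstance

/-- Value of a box element. -/
def bval {d R : ℕ} (y : BoxT d R) : Fin d → ℤ := fun j => (y j : ℤ)

lemma bval_injective {d R : ℕ} : Function.Injective (bval (d := d) (R := R)) := by
  intro y y' h
  funext j
  exact Subtype.ext (congrFun h j)

lemma bval_abs_le {d R : ℕ} (y : BoxT d R) (j : Fin d) : |bval y j| ≤ (R:ℤ) := by
  have := (y j).2
  rw [Finset.mem_Icc] at this
  rw [abs_le]
  exact ⟨this.1, this.2⟩

/-- Clamping a vector into the box. -/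
def clampBox (d R : ℕ) (t : Fin d → ℤ) : BoxT d R :=
  fun j => ⟨clampZ R (t j), by
    rw [Finset.mem_Icc]
    unfold clampZ
    constructor
    · exact le_max_left _ _
    · rw [max_le_iff]
      exact ⟨by omega, min_le_left _ _⟩⟩

lemma bval_clampBox {d R : ℕ} {t : Fin d → ℤ} (h : ∀ j, |t j| ≤ (R:ℤ)) :
    bval (clampBox d R t) = t := by
  funext j
  show clampZ R (t j) = t j
  exact clampZ_of_abs_le (h j)

/-- Coordinatewise bound for positions. -/
lemma pos_abs_le {d n : ℕ} (s : Fin n → Fin d × Bool) (i : ℕ) (j : Fin d) :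
    |pos s i j| ≤ (i : ℤ) := by
  unfold pos
  have h1 : |(∑ j' ∈ Finset.univ.filter (fun j' : Fin n => (j' : ℕ) < i), step d (s j')) j|
      ≤ ∑ j' ∈ Finset.univ.filter (fun j' : Fin n => (j' : ℕ) < i), |step d (s j') j| := by
    rw [Finset.sum_apply]
    exact Finset.abs_sum_le_sum_abs _ _
  have h2 : ∀ j' : Fin n, |step d (s j') j| ≤ 1 := by
    intro j'
    unfold step
    by_cases h : j = (s j').1
    · by_cases hb : (s j').2 <;> simp [h, hb]
    · simp [h]
  have h3 : ∑ j' ∈ Finset.univ.filter (fun j' : Fin n => (j' : ℕ) < i), |step d (s j') j|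
      ≤ ∑ _j' ∈ Finset.univ.filter (fun j' : Fin n => (j' : ℕ) < i), (1:ℤ) :=
    Finset.sum_le_sum fun j' _ => h2 j'
  have h4 : (Finset.univ.filter (fun j' : Fin n => (j' : ℕ) < i)).card ≤ i := by
    calc (Finset.univ.filter (fun j' : Fin n => (j' : ℕ) < i)).card
        ≤ (Finset.range i).card :=
          Finset.card_le_card_of_injOn (fun j' => (j' : ℕ))
            (fun j' hj' => Finset.mem_range.2 ((Finset.mem_filter.1 hj').2))
            (fun a _ b _ h => Fin.ext h)
      _ = i := Finset.card_range i
  calc |pos s i j| ≤ ∑ _j' ∈ Finset.univ.filter (fun j' : Fin n => (j' : ℕ) < i), (1:ℤ) :=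
        le_trans h1 h3
    _ = ((Finset.univ.filter (fun j' : Fin n => (j' : ℕ) < i)).card : ℤ) := by
        rw [Finset.sum_const, nsmul_eq_mul, mul_one]
    _ ≤ (i : ℤ) := by exact_mod_cast h4

/-- Index type for the polymer environment with `k` blocks, box radius `R`. -/
def PPy (d m R : ℕ) : ℕ → Type
  | 0 => Empty
  | k+1 => (Fin m × BoxT d R) ⊕ PPy d m R k

instance PPy.fintype (d m R : ℕ) : ∀ k, Fintype (PPy d m R k)
  | 0 => inferInstanceAs (Fintype Empty)
  | k+1 => letI := PPy.fintype d m R k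
           inferInstanceAs (Fintype ((Fin m × BoxT d R) ⊕ PPy d m R k))

/-- Index type for the tree environment with `k` blocks. -/
def TTy (d m : ℕ) : ℕ → Type
  | 0 => Empty
  | k+1 => (Fin m × BoxT d m) ⊕ (BoxT d m × TTy d m k)

instance TTy.fintype (d m : ℕ) : ∀ k, Fintype (TTy d m k)
  | 0 => inferInstanceAs (Fintype Empty)
  | k+1 => letI := TTy.fintype d m k
           inferInstanceAs (Fintype ((Fin m × BoxT d m) ⊕ (BoxT d m × TTy d m k)))

/-- Clean polymer energy: `k` blocks, base point `z`, box radius `R`. -/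
def polyE (d m R : ℕ) : (k : ℕ) → (Fin d → ℤ) → (Fin k → (Fin m → Fin d × Bool)) →
    (PPy d m R k → ℝ) → ℝ
  | 0, _, _, _ => 0
  | k+1, z, p, x =>
      (∑ j : Fin m, x (Sum.inl (j, clampBox d R (z + pos (p 0) (j+1)))))
      + polyE d m R k (z + pos (p 0) m) (fun i => p i.succ) (fun v => x (Sum.inr v))

/-- Clean tree energy: `k` blocks. -/
def treeE' (d m : ℕ) : (k : ℕ) → (Fin k → (Fin m → Fin d × Bool)) → (TTy d m k → ℝ) → ℝ
  | 0, _, _ => 0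
  | k+1, p, x =>
      (∑ j : Fin m, x (Sum.inl (j, clampBox d m (pos (p 0) (j+1)))))
      + treeE' d m k (fun i => p i.succ)
          (fun v => x (Sum.inr (clampBox d m (pos (p 0) m), v)))

lemma polyE_mono (d m R : ℕ) : ∀ (k : ℕ) (z : Fin d → ℤ) (p : Fin k → (Fin m → Fin d × Bool)),
    Monotone (polyE d m R k z p)
  | 0, _, _ => fun x y _ => le_rfl
  | k+1, z, p => by
      intro x y hxy
      show (∑ j : Fin m, x (Sum.inl (j, clampBox d R (z + pos (p 0) (j+1)))))
          + polyE d m R k (z + pos (p 0) m) (fun i => p i.succ) (fun v => x (Sum.inr v))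
        ≤ (∑ j : Fin m, y (Sum.inl (j, clampBox d R (z + pos (p 0) (j+1)))))
          + polyE d m R k (z + pos (p 0) m) (fun i => p i.succ) (fun v => y (Sum.inr v))
      exact add_le_add (Finset.sum_le_sum fun j _ => hxy _)
        (polyE_mono d m R k _ _ (fun v => hxy _))

lemma polyE_measurable (d m R : ℕ) :
    ∀ (k : ℕ) (z : Fin d → ℤ) (p : Fin k → (Fin m → Fin d × Bool)),
    Measurable (polyE d m R k z p)
  | 0, _, _ => measurable_const
  | k+1, z, p => by
      have heq : polyE d m R (k+1) z p = fun x =>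
          (∑ j : Fin m, x (Sum.inl (j, clampBox d R (z + pos (p 0) (j+1)))))
          + polyE d m R k (z + pos (p 0) m) (fun i => p i.succ) (fun v => x (Sum.inr v)) := rfl
      rw [heq]
      apply Measurable.add
      · exact Finset.measurable_sum _ fun j _ => measurable_pi_apply _
      · exact (polyE_measurable d m R k _ _).comp
          (measurable_pi_lambda _ fun v => measurable_pi_apply _)

lemma treeE'_measurable (d m : ℕ) :
    ∀ (k : ℕ) (p : Fin k → (Fin m → Fin d × Bool)), Measurable (treeE' d m k p)
  | 0, _ => measurable_const
  | k+1, p => by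
      have heq : treeE' d m (k+1) p = fun x =>
          (∑ j : Fin m, x (Sum.inl (j, clampBox d m (pos (p 0) (j+1)))))
          + treeE' d m k (fun i => p i.succ)
              (fun v => x (Sum.inr (clampBox d m (pos (p 0) m), v))) := rfl
      rw [heq]
      apply Measurable.add
      · exact Finset.measurable_sum _ fun j _ => measurable_pi_apply _
      · exact (treeE'_measurable d m k _).comp
          (measurable_pi_lambda _ fun v => measurable_pi_apply _)

/-- Translation by `w` of polymer environment indices. -/
def shiftP (d m R' R : ℕ) (w : Fin d → ℤ) : ∀ k, PPy d m R' k → PPy d m R k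
  | k+1, Sum.inl (j, y) => Sum.inl (j, clampBox d R (w + bval y))
  | k+1, Sum.inr v => Sum.inr (shiftP d m R' R w k v)

lemma shiftP_inj_aux (d m R' R : ℕ) (w : Fin d → ℤ)
    (hw : ∀ j, |w j| + (R' : ℤ) ≤ (R : ℤ)) :
    ∀ k (a b : PPy d m R' k), shiftP d m R' R w k a = shiftP d m R' R w k b → a = b
  | 0, a, _, _ => a.elim
  | k+1, Sum.inl (j, y), Sum.inl (j', y'), h => by
      have hval : ∀ y : BoxT d R', bval (clampBox d R (w + bval y)) = w + bval y := by
        intro y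
        refine bval_clampBox fun jj => ?_
        have h1 := bval_abs_le y jj
        have h2 := hw jj
        have h3 := abs_add_le (w jj) (bval y jj)
        simp only [Pi.add_apply]
        omega
      have h' : (Sum.inl (j, clampBox d R (w + bval y)) :
            (Fin m × BoxT d R) ⊕ PPy d m R k)
          = Sum.inl (j', clampBox d R (w + bval y')) := h
      have h2 := Sum.inl.inj h'
      have hj : j = j' := congrArg Prod.fst h2
      have hy : clampBox d R (w + bval y) = clampBox d R (w + bval y') :=
        congrArg Prod.snd h2
      have hy2 : w + bval y = w + bval y' := by
        rw [← hval y, ← hval y', hy]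
      have hy3 : bval y = bval y' := by
        funext jj
        have := congrFun hy2 jj
        simp only [Pi.add_apply] at this
        omega
      rw [hj, bval_injective hy3]
  | k+1, Sum.inl (j, y), Sum.inr v, h => by
      simp [shiftP] at h
  | k+1, Sum.inr v, Sum.inl (j, y), h => by
      simp [shiftP] at h
  | k+1, Sum.inr v, Sum.inr v', h => by
      have h' := Sum.inr.inj h
      rw [shiftP_inj_aux d m R' R w hw k v v' h']

lemma shiftP_injective (d m R' R : ℕ) (w : Fin d → ℤ)
    (hw : ∀ j, |w j| + (R' : ℤ) ≤ (R : ℤ)) (k : ℕ) :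
    Function.Injective (shiftP d m R' R w k) :=
  fun a b h => shiftP_inj_aux d m R' R w hw k a b h

/-- Translation identity for the clean polymer energy. -/
lemma polyE_shift (d m R R' : ℕ) (w : Fin d → ℤ) :
    ∀ (k : ℕ) (zB : Fin d → ℤ) (p : Fin k → (Fin m → Fin d × Bool)) (x : PPy d m R k → ℝ),
    (∀ j, |zB j| + (k*m : ℤ) ≤ (R' : ℤ)) →
    polyE d m R k (w + zB) p x = polyE d m R' k zB p (x ∘ shiftP d m R' R w k)
  | 0, _, _, _, _ => rfl
  | k+1, zB, p, x, hB => by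
      have hkm : (0:ℤ) ≤ (k*m : ℤ) := by positivity
      have hBm : ∀ jj, |zB jj| + (m:ℤ) + (k*m:ℤ) ≤ (R' : ℤ) := by
        intro jj
        have h3 := hB jj
        push_cast at h3 ⊢
        nlinarith
      show (∑ j : Fin m, x (Sum.inl (j, clampBox d R ((w + zB) + pos (p 0) (j+1)))))
          + polyE d m R k ((w + zB) + pos (p 0) m) (fun i => p i.succ) (fun v => x (Sum.inr v))
        = (∑ j : Fin m, (x ∘ shiftP d m R' R w (k+1))
              (Sum.inl (j, clampBox d R' (zB + pos (p 0) (j+1)))))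
          + polyE d m R' k (zB + pos (p 0) m) (fun i => p i.succ)
              (fun v => (x ∘ shiftP d m R' R w (k+1)) (Sum.inr v))
      congr 1
      · refine Finset.sum_congr rfl fun j _ => ?_
        have harg : bval (clampBox d R' (zB + pos (p 0) ((j:ℕ)+1)))
            = zB + pos (p 0) ((j:ℕ)+1) := by
          refine bval_clampBox fun jj => ?_
          have h1 : |pos (p 0) ((j:ℕ)+1) jj| ≤ ((j:ℕ)+1 : ℤ) := pos_abs_le _ _ _
          have h2 : ((j:ℕ)+1 : ℤ) ≤ (m : ℤ) := by exact_mod_cast j.2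
          have h3 := hBm jj
          have h4 := abs_add_le (zB jj) (pos (p 0) ((j:ℕ)+1) jj)
          simp only [Pi.add_apply]
          omega
        show x (Sum.inl (j, clampBox d R ((w + zB) + pos (p 0) ((j:ℕ)+1))))
            = x (shiftP d m R' R w (k+1) (Sum.inl (j, clampBox d R' (zB + pos (p 0) ((j:ℕ)+1)))))
        have hrhs : shiftP d m R' R w (k+1)
              (Sum.inl (j, clampBox d R' (zB + pos (p 0) ((j:ℕ)+1))))
            = Sum.inl (j, clampBox d R (w + (zB + pos (p 0) ((j:ℕ)+1)))) := by
          show (Sum.inl (j, clampBox d R (w + bval (clampBox d R' (zB + pos (p 0) ((j:ℕ)+1))))) :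
              (Fin m × BoxT d R) ⊕ PPy d m R k) = _
          rw [harg]
        rw [hrhs, add_assoc]
      · have hB' : ∀ jj, |(zB + pos (p 0) m) jj| + (k*m : ℤ) ≤ (R' : ℤ) := by
          intro jj
          have h1 : |pos (p 0) m jj| ≤ (m : ℤ) := pos_abs_le _ _ _
          have h3 := hBm jj
          have h4 := abs_add_le (zB jj) (pos (p 0) m jj)
          simp only [Pi.add_apply]
          omega
        have := polyE_shift d m R R' w k (zB + pos (p 0) m) (fun i => p i.succ)
          (fun v => x (Sum.inr v)) hB'
        rw [add_assoc, this]
        rfl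

end Models

section PosLemmas

lemma pos_zero {d n : ℕ} (s : Fin n → Fin d × Bool) : pos s 0 = 0 := by
  unfold pos
  rw [Finset.filter_false_of_mem (fun j _ => by omega), Finset.sum_empty]

lemma pos_succ {d n : ℕ} (s : Fin n → Fin d × Bool) (i : ℕ) (hi : i < n) :
    pos s (i+1) = pos s i + step d (s ⟨i, hi⟩) := by
  unfold pos
  have hset : Finset.univ.filter (fun j : Fin n => (j:ℕ) < i+1)
      = insert ⟨i, hi⟩ (Finset.univ.filter (fun j : Fin n => (j:ℕ) < i)) := by
    ext j
    simp only [Finset.mem_filter, Finset.mem_univ, true_and, Finset.mem_insert, Fin.ext_iff]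
    omega
  rw [hset, Finset.sum_insert (by simp)]
  rw [add_comm]

lemma pos_stop {d n : ℕ} (s : Fin n → Fin d × Bool) (i : ℕ) (hi : n ≤ i) :
    pos s i = pos s n := by
  unfold pos
  congr 1
  ext j
  simp only [Finset.mem_filter, Finset.mem_univ, true_and]
  have := j.2
  omega

lemma pos_congr {d n n' : ℕ} (s : Fin n → Fin d × Bool) (s' : Fin n' → Fin d × Bool)
    (c : ℕ) (hc : c ≤ n) (hc' : c ≤ n')
    (h : ∀ (j : ℕ) (hj : j < c), s ⟨j, lt_of_lt_of_le hj hc⟩ = s' ⟨j, lt_of_lt_of_le hj hc'⟩) :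
    pos s c = pos s' c := by
  induction c with
  | zero => rw [pos_zero, pos_zero]
  | succ c IH =>
    rw [pos_succ s c (lt_of_lt_of_le (Nat.lt_succ_self c) hc),
      pos_succ s' c (lt_of_lt_of_le (Nat.lt_succ_self c) hc'),
      IH (le_trans (Nat.le_succ c) hc) (le_trans (Nat.le_succ c) hc')
        (fun j hj => h j (lt_trans hj (Nat.lt_succ_self c))),
      h c (Nat.lt_succ_self c)]

/-- Splitting a position at an intermediate time. -/
lemma pos_split {d n : ℕ} (s : Fin n → Fin d × Bool) (a : ℕ)
    (tl : Fin (n - a) → Fin d × Bool)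
    (htl : ∀ (i : ℕ) (hi : i < n - a), tl ⟨i, hi⟩ = s ⟨a + i, by omega⟩) :
    ∀ (c : ℕ), a + c ≤ n → pos s (a + c) = pos s a + pos tl c := by
  intro c
  induction c with
  | zero => intro _; rw [pos_zero, add_zero, add_zero]
  | succ c IH =>
    intro hc
    have hc' : a + c ≤ n := by omega
    have h1 : a + c < n := by omega
    have h2 : c < n - a := by omega
    rw [show a + (c+1) = (a+c) + 1 by ring, pos_succ s (a+c) h1, IH hc',
      pos_succ tl c h2, htl c h2, add_assoc]

end PosLemmas

section Link

variable {d : ℕ}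

/-- Regrouping a path into `k` blocks of length `m`. -/
def toPT (d m k : ℕ) (s : Fin (k*m) → Fin d × Bool) : Fin k → Fin m → Fin d × Bool :=
  fun l j => s ⟨(l:ℕ)*m + (j:ℕ), by
    have h1 : (l:ℕ) + 1 ≤ k := l.2
    have h2 : (j:ℕ) < m := j.2
    calc (l:ℕ)*m + (j:ℕ) < (l:ℕ)*m + m := by omega
      _ = ((l:ℕ)+1)*m := by ring
      _ ≤ k*m := Nat.mul_le_mul_right m h1⟩

/-- The tail of a path after the first block. -/
def tailB (d m k : ℕ) (s : Fin ((k+1)*m) → Fin d × Bool) : Fin (k*m) → Fin d × Bool :=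
  fun i => s ⟨m + (i:ℕ), by
    have h2 : (i:ℕ) < k*m := i.2
    have : (k+1)*m = m + k*m := by ring
    omega⟩

lemma toPT_succ (d m k : ℕ) (s : Fin ((k+1)*m) → Fin d × Bool) :
    (fun i : Fin k => toPT d m (k+1) s i.succ) = toPT d m k (tailB d m k s) := by
  funext l j
  show s _ = s _
  congr 1
  rw [Fin.ext_iff]
  show ((l:ℕ)+1)*m + (j:ℕ) = m + ((l:ℕ)*m + (j:ℕ))
  ring

lemma pos_toPT_zero (d m k : ℕ) (s : Fin ((k+1)*m) → Fin d × Bool) (c : ℕ) (hc : c ≤ m) :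
    pos (toPT d m (k+1) s 0) c = pos s c := by
  have hm : m ≤ (k+1)*m := by nlinarith
  refine pos_congr _ s c hc (le_trans hc hm) (fun j hj => ?_)
  show s _ = s _
  congr 1
  rw [Fin.ext_iff]
  show (0:ℕ)*m + j = j
  ring

lemma pos_tailB (d m k : ℕ) (s : Fin ((k+1)*m) → Fin d × Bool) (c : ℕ) (hc : c ≤ k*m) :
    pos s (m + c) = pos s m + pos (tailB d m k s) c := by
  have hn : (k+1)*m = m + k*m := by ring
  set tl : Fin ((k+1)*m - m) → Fin d × Bool :=
    (fun i => tailB d m k s ⟨(i:ℕ), by have := i.2; omega⟩) with htl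
  have h1 : pos s (m + c) = pos s m + pos tl c := by
    refine pos_split s m tl (fun i hi => ?_) c (by omega)
    show s _ = s _
    congr 1
  have h2 : pos tl c = pos (tailB d m k s) c := by
    refine pos_congr tl (tailB d m k s) c (by omega) (by omega) (fun j hj => ?_)
    show s _ = s _
    congr 1
  rw [h1, h2]

/-- Original environment index of a clean polymer index. -/
def rhoP (d m R : ℕ) : (off : ℕ) → (k : ℕ) → PPy d m R k → ℕ × (Fin d → ℤ)
  | _, 0, a => a.elim
  | off, _+1, Sum.inl (j, y) => (off + (j:ℕ) + 1, bval y)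
  | off, k+1, Sum.inr v => rhoP d m R (off + m) k v

lemma rhoP_fst_lt (d m R : ℕ) : ∀ (k : ℕ) (off : ℕ) (a : PPy d m R k),
    off < (rhoP d m R off k a).1
  | 0, _, a => a.elim
  | k+1, off, Sum.inl (j, y) => by
      show off < off + (j:ℕ) + 1
      omega
  | k+1, off, Sum.inr v => by
      have := rhoP_fst_lt d m R k (off + m) v
      show off < (rhoP d m R (off + m) k v).1
      omega

lemma rhoP_injective (d m R : ℕ) : ∀ (k : ℕ) (off : ℕ) (a b : PPy d m R k),
    rhoP d m R off k a = rhoP d m R off k b → a = b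
  | 0, _, a, _, _ => a.elim
  | k+1, off, Sum.inl (j, y), Sum.inl (j', y'), h => by
      have h1 : off + (j:ℕ) + 1 = off + (j':ℕ) + 1 := congrArg Prod.fst h
      have h2 : bval y = bval y' := congrArg Prod.snd h
      have hj : j = j' := Fin.ext (by omega)
      rw [hj, bval_injective h2]
  | k+1, off, Sum.inl (j, y), Sum.inr v, h => by
      exfalso
      have h2 := rhoP_fst_lt d m R k (off + m) v
      have h3 : off + (j:ℕ) + 1 = (rhoP d m R (off + m) k v).1 := congrArg Prod.fst h
      have h4 : (j:ℕ) < m := j.2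
      omega
  | k+1, off, Sum.inr v, Sum.inl (j, y), h => by
      exfalso
      have h2 := rhoP_fst_lt d m R k (off + m) v
      have h3 : (rhoP d m R (off + m) k v).1 = off + (j:ℕ) + 1 := congrArg Prod.fst h
      have h4 : (j:ℕ) < m := j.2
      omega
  | k+1, off, Sum.inr v, Sum.inr v', h => by
      rw [rhoP_injective d m R k (off + m) v v' h]

/-- Original environment index of a clean tree index. -/
def rhoT (d m : ℕ) : (k : ℕ) → TTy d m k → List (Fin d → ℤ) × ℕ × (Fin d → ℤ)
  | _+1, Sum.inl (j, y) => ([], ((j:ℕ)+1, bval y))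
  | k+1, Sum.inr (z, v) =>
      ((bval z) :: (rhoT d m k v).1.map (· + bval z), (rhoT d m k v).2)
  | 0, a => a.elim

lemma rhoT_injective (d m : ℕ) : ∀ (k : ℕ) (a b : TTy d m k),
    rhoT d m k a = rhoT d m k b → a = b
  | 0, a, _, _ => a.elim
  | k+1, Sum.inl (j, y), Sum.inl (j', y'), h => by
      have h2 : ((j:ℕ)+1, bval y) = ((j':ℕ)+1, bval y') := congrArg Prod.snd h
      have hj : (j:ℕ)+1 = (j':ℕ)+1 := congrArg Prod.fst h2
      have hy : bval y = bval y' := congrArg Prod.snd h2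
      have : j = j' := Fin.ext (by omega)
      rw [this, bval_injective hy]
  | k+1, Sum.inl (j, y), Sum.inr (z, v), h => by
      exact absurd (congrArg Prod.fst h) (by simp [rhoT])
  | k+1, Sum.inr (z, v), Sum.inl (j, y), h => by
      exact absurd (congrArg Prod.fst h) (by simp [rhoT])
  | k+1, Sum.inr (z, v), Sum.inr (z', v'), h => by
      have h1 := congrArg Prod.fst h
      have h2 : bval z = bval z' := by
        have := congrArg (fun l : List (Fin d → ℤ) => l.head?) h1
        simpa [rhoT] using this
      have hz : z = z' := bval_injective h2
      have h3 : (rhoT d m k v).1.map (· + bval z) = (rhoT d m k v').1.map (· + bval z) := by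
        have := congrArg (fun l : List (Fin d → ℤ) => l.tail) h1
        simp only [rhoT, List.tail_cons] at this
        rw [h2] at this ⊢
        exact this
      have h4 : (rhoT d m k v).1 = (rhoT d m k v').1 := by
        have hinj : Function.Injective (· + bval z) := fun a b hab => by
          simpa using hab
        exact List.map_injective_iff.2 hinj h3
      have h5 := congrArg Prod.snd h
      have : rhoT d m k v = rhoT d m k v' := Prod.ext h4 h5
      rw [hz, rhoT_injective d m k v v' this]

/-- Bound `|pos s c j| ≤ m` when `c ≤ m`. -/
lemma pos_abs_le_gen {d n : ℕ} (s : Fin n → Fin d × Bool) (c m' : ℕ) (hc : c ≤ m')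
    (j : Fin d) : |pos s c j| ≤ (m' : ℤ) := by
  have h1 := pos_abs_le s c j
  have h2 : (c:ℤ) ≤ (m':ℤ) := by exact_mod_cast hc
  omega

end Link

section EnergyLink

/-- The clean polymer energy evaluated on the pulled-back environment equals the
flat polymer sum. -/
lemma linkP (d m R : ℕ) : ∀ (k : ℕ) (off : ℕ) (z : Fin d → ℤ),
    (∀ jj, |z jj| + (k*m : ℤ) ≤ (R:ℤ)) → ∀ (s : Fin (k*m) → Fin d × Bool)
    (E : ℕ × (Fin d → ℤ) → ℝ),
    polyE d m R k z (toPT d m k s) (fun a => E (rhoP d m R off k a))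
      = ∑ i ∈ Finset.range (k*m), E (off + i + 1, z + pos s (i+1))
  | 0, off, z, hz, s, E => by simp [polyE]
  | k+1, off, z, hz, s, E => by
    have hmle : (m:ℤ) + (k*m:ℤ) = ((k+1)*m : ℤ) := by push_cast; ring
    have hzm : ∀ jj c, c ≤ m → |z jj + pos s c jj| ≤ (R:ℤ) := by
      intro jj c hc
      have h1 : |pos s c jj| ≤ (c:ℤ) := pos_abs_le _ _ _
      have h2 := hz jj
      have h3 := abs_add_le (z jj) (pos s c jj)
      have h4 : (c:ℤ) ≤ (m:ℤ) := by exact_mod_cast hc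
      have h5 : (0:ℤ) ≤ (k*m:ℤ) := by positivity
      push_cast at h2 ⊢
      nlinarith
    show (∑ j : Fin m, E (rhoP d m R off (k+1)
          (Sum.inl (j, clampBox d R (z + pos (toPT d m (k+1) s 0) ((j:ℕ)+1))))))
        + polyE d m R k (z + pos (toPT d m (k+1) s 0) m)
            (fun i => toPT d m (k+1) s i.succ)
            (fun v => E (rhoP d m R off (k+1) (Sum.inr v)))
      = ∑ i ∈ Finset.range ((k+1)*m), E (off + i + 1, z + pos s (i+1))
    have hsplit : (k+1)*m = m + k*m := by ring
    rw [show Finset.range ((k+1)*m) = Finset.range (m + k*m) from congrArg _ hsplit,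
      Finset.sum_range_add]
    congr 1
    · rw [← Fin.sum_univ_eq_sum_range (fun i => E (off + i + 1, z + pos s (i+1))) m]
      refine Finset.sum_congr rfl fun j _ => ?_
      have hj1 : (j:ℕ)+1 ≤ m := j.2
      have hpos : pos (toPT d m (k+1) s 0) ((j:ℕ)+1) = pos s ((j:ℕ)+1) :=
        pos_toPT_zero d m k s _ hj1
      show E (off + (j:ℕ) + 1, bval (clampBox d R (z + pos (toPT d m (k+1) s 0) ((j:ℕ)+1))))
        = E (off + (j:ℕ) + 1, z + pos s ((j:ℕ)+1))
      rw [hpos, bval_clampBox (fun jj => by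
        simp only [Pi.add_apply]; exact hzm jj ((j:ℕ)+1) hj1)]
    · have hz' : ∀ jj, |(z + pos s m) jj| + (k*m:ℤ) ≤ (R:ℤ) := by
        intro jj
        have h1 : |pos s m jj| ≤ (m:ℤ) := pos_abs_le _ _ _
        have h2 := hz jj
        have h3 := abs_add_le (z jj) (pos s m jj)
        simp only [Pi.add_apply]
        push_cast at h2 ⊢
        nlinarith
      have hIH := linkP d m R k (off + m) (z + pos s m) hz' (tailB d m k s) E
      rw [pos_toPT_zero d m k s m le_rfl, toPT_succ d m k s]
      have hrec : (fun v => E (rhoP d m R off (k+1) (Sum.inr v)))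
          = fun v => E (rhoP d m R (off + m) k v) := rfl
      rw [hrec, hIH]
      refine Finset.sum_congr rfl fun i hi => ?_
      have hik : i + 1 ≤ k*m := by
        rw [Finset.mem_range] at hi; omega
      refine congrArg E ?_
      have h1 : off + m + i + 1 = off + (m + i) + 1 := by ring
      have h2 : z + pos s m + pos (tailB d m k s) (i+1) = z + pos s (m + i + 1) := by
        rw [show m + i + 1 = m + (i+1) from by ring, pos_tailB d m k s (i+1) hik, add_assoc]
      rw [h1, h2]

/-- The clean tree energy evaluated on the pulled-back environment equals the
flat tree sum. -/
lemma linkT (d m : ℕ) : ∀ (k : ℕ) (s : Fin (k*m) → Fin d × Bool)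
    (E : List (Fin d → ℤ) × ℕ × (Fin d → ℤ) → ℝ),
    treeE' d m k (toPT d m k s) (fun a => E (rhoT d m k a))
      = ∑ l ∈ Finset.range k, ∑ j ∈ Finset.range m,
          E (treeWord m s l, ((j:ℕ)+1, pos s (l*m + (j+1)) - pos s (l*m)))
  | 0, s, E => by simp [treeE']
  | k+1, s, E => by
    show (∑ j : Fin m, E (rhoT d m (k+1)
          (Sum.inl (j, clampBox d m (pos (toPT d m (k+1) s 0) ((j:ℕ)+1))))))
        + treeE' d m k (fun i => toPT d m (k+1) s i.succ)
            (fun v => E (rhoT d m (k+1)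
              (Sum.inr (clampBox d m (pos (toPT d m (k+1) s 0) m), v))))
      = _
    rw [Finset.sum_range_succ']
    have hfirst : (∑ j : Fin m, E (rhoT d m (k+1)
          (Sum.inl (j, clampBox d m (pos (toPT d m (k+1) s 0) ((j:ℕ)+1))))))
        = ∑ j ∈ Finset.range m,
            E (treeWord m s 0, ((j:ℕ)+1, pos s (0*m + (j+1)) - pos s (0*m))) := by
      rw [← Fin.sum_univ_eq_sum_range (fun j =>
        E (treeWord m s 0, ((j:ℕ)+1, pos s (0*m + (j+1)) - pos s (0*m)))) m]
      refine Finset.sum_congr rfl fun j _ => ?_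
      have hj1 : (j:ℕ)+1 ≤ m := j.2
      have hpos : pos (toPT d m (k+1) s 0) ((j:ℕ)+1) = pos s ((j:ℕ)+1) :=
        pos_toPT_zero d m k s _ hj1
      show E ([], ((j:ℕ)+1, bval (clampBox d m (pos (toPT d m (k+1) s 0) ((j:ℕ)+1))))) = _
      rw [hpos, bval_clampBox (fun jj => pos_abs_le_gen s ((j:ℕ)+1) m hj1 jj)]
      have h0 : treeWord m s 0 = [] := by
        unfold treeWord
        exact List.ofFn_zero
      have h1 : 0*m + ((j:ℕ)+1) = (j:ℕ)+1 := by ring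
      have h2 : pos s (0*m) = 0 := by
        rw [show 0*m = 0 by ring, pos_zero]
      rw [h0, h1, h2, sub_zero]
    rw [hfirst]
    rw [add_comm]
    congr 1
    -- recursive part
    set z0 := clampBox d m (pos (toPT d m (k+1) s 0) m) with hz0
    have hbz0 : bval z0 = pos s m := by
      rw [hz0, pos_toPT_zero d m k s m le_rfl]
      exact bval_clampBox (fun jj => pos_abs_le_gen s m m le_rfl jj)
    have hrec : (fun v => E (rhoT d m (k+1) (Sum.inr (z0, v))))
        = fun v => (fun q : List (Fin d → ℤ) × ℕ × (Fin d → ℤ) =>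
            E (bval z0 :: q.1.map (· + bval z0), q.2)) (rhoT d m k v) := rfl
    rw [toPT_succ d m k s, hrec,
      linkT d m k (tailB d m k s) (fun q => E (bval z0 :: q.1.map (· + bval z0), q.2))]
    refine Finset.sum_congr rfl fun l hl => ?_
    refine Finset.sum_congr rfl fun j hj => ?_
    rw [Finset.mem_range] at hl hj
    have hword : treeWord m s (l+1)
        = bval z0 :: (treeWord m (tailB d m k s) l).map (· + bval z0) := by
      rw [hbz0]
      unfold treeWord
      rw [List.ofFn_succ]
      congr 1
      · show pos s ((0+1)*m) = pos s m
        norm_num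
      · rw [List.map_ofFn]
        refine congrArg _ (funext fun r => ?_)
        show pos s (((r:ℕ)+1+1)*m) = pos (tailB d m k s) (((r:ℕ)+1)*m) + pos s m
        have hr : (r:ℕ) + 1 ≤ k := by have := r.2; omega
        have harith : ((r:ℕ)+1+1)*m = m + ((r:ℕ)+1)*m := by ring
        have hle : ((r:ℕ)+1)*m ≤ k*m := Nat.mul_le_mul_right m hr
        rw [harith, pos_tailB d m k s _ hle, add_comm]
    have hdelta : pos s ((l+1)*m + (j+1)) - pos s ((l+1)*m)
        = pos (tailB d m k s) (l*m + (j+1)) - pos (tailB d m k s) (l*m) := by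
      have ha1 : (l+1)*m + (j+1) = m + (l*m + (j+1)) := by ring
      have ha2 : (l+1)*m = m + l*m := by ring
      have hle1 : l*m + (j+1) ≤ k*m := by
        have : (l+1)*m ≤ k*m := Nat.mul_le_mul_right m (by omega)
        calc l*m + (j+1) ≤ l*m + m := by omega
          _ = (l+1)*m := by ring
          _ ≤ k*m := this
      have hle2 : l*m ≤ k*m := Nat.mul_le_mul_right m (by omega)
      rw [ha1, ha2, pos_tailB d m k s _ hle1, pos_tailB d m k s _ hle2]
      abel
    rw [hword, hdelta]

end EnergyLink

section MainComp

/-- First-block energy. -/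
def fstE (d m R : ℕ) (b : Fin m → Fin d × Bool) (e : Fin m × BoxT d R → ℝ) : ℝ :=
  ∑ j : Fin m, e (j, clampBox d R (pos b ((j:ℕ)+1)))

lemma fstE_meas (d m R : ℕ) (b : Fin m → Fin d × Bool) : Measurable (fstE d m R b) :=
  Finset.measurable_sum _ fun j _ => measurable_pi_apply _

lemma fstE_comp (d m R : ℕ) (hmR : m ≤ R) (b : Fin m → Fin d × Bool)
    (e : Fin m × BoxT d R → ℝ) :
    fstE d m R b e = fstE d m m b (fun u => e (u.1, clampBox d R (bval u.2))) := by
  unfold fstE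
  refine Finset.sum_congr rfl fun j _ => ?_
  show e (j, clampBox d R (pos b ((j:ℕ)+1)))
    = e (j, clampBox d R (bval (clampBox d m (pos b ((j:ℕ)+1)))))
  rw [bval_clampBox (fun jj => pos_abs_le_gen b ((j:ℕ)+1) m j.2 jj)]

lemma polyE_succ_eq (d m R k : ℕ) (z : Fin d → ℤ) (p : Fin (k+1) → Fin m → Fin d × Bool)
    (x : PPy d m R (k+1) → ℝ) :
    polyE d m R (k+1) z p x
      = (∑ j : Fin m, x (Sum.inl (j, clampBox d R (z + pos (p 0) ((j:ℕ)+1)))))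
        + polyE d m R k (z + pos (p 0) m) (fun i => p i.succ)
            (fun v => x (Sum.inr v)) := rfl

lemma polyE_cons (d m R k : ℕ) (b : Fin m → Fin d × Bool)
    (q : Fin k → Fin m → Fin d × Bool) (x : PPy d m R (k+1) → ℝ) :
    polyE d m R (k+1) 0 (Fin.cons b q) x
      = fstE d m R b (fun u => x (Sum.inl u))
        + polyE d m R k (pos b m) q (fun v => x (Sum.inr v)) := by
  rw [polyE_succ_eq]
  have h0 : (Fin.cons b q : Fin (k+1) → Fin m → Fin d × Bool) 0 = b := rfl
  have h1 : (fun i => (Fin.cons b q : Fin (k+1) → Fin m → Fin d × Bool) i.succ) = q := by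
    funext i; exact @Fin.cons_succ k (fun _ : Fin (k+1) => Fin m → Fin d × Bool) b q i
  rw [h0, h1]
  simp only [zero_add]
  rfl

lemma treeE'_succ_eq (d m k : ℕ) (p : Fin (k+1) → Fin m → Fin d × Bool)
    (x : TTy d m (k+1) → ℝ) :
    treeE' d m (k+1) p x
      = (∑ j : Fin m, x (Sum.inl (j, clampBox d m (pos (p 0) ((j:ℕ)+1)))))
        + treeE' d m k (fun i => p i.succ)
            (fun v => x (Sum.inr (clampBox d m (pos (p 0) m), v))) := rfl

lemma treeE'_cons (d m k : ℕ) (b : Fin m → Fin d × Bool)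
    (q : Fin k → Fin m → Fin d × Bool) (x : TTy d m (k+1) → ℝ) :
    treeE' d m (k+1) (Fin.cons b q) x
      = fstE d m m b (fun u => x (Sum.inl u))
        + treeE' d m k q (fun v => x (Sum.inr (clampBox d m (pos b m), v))) := by
  rw [treeE'_succ_eq]
  have h0 : (Fin.cons b q : Fin (k+1) → Fin m → Fin d × Bool) 0 = b := rfl
  have h1 : (fun i => (Fin.cons b q : Fin (k+1) → Fin m → Fin d × Bool) i.succ) = q := by
    funext i; exact @Fin.cons_succ k (fun _ : Fin (k+1) => Fin m → Fin d × Bool) b q i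
  rw [h0, h1]
  rfl

lemma forall_cons_path {m d k : ℕ} {P : (Fin (k+1) → Fin m → Fin d × Bool) → Prop} :
    (∀ p, P p) ↔ ∀ (b : Fin m → Fin d × Bool) (q : Fin k → Fin m → Fin d × Bool),
      P (Fin.cons b q) :=
  ⟨fun h _ _ => h _, fun h p => by
    have h2 := h (p 0) (fun i => p i.succ)
    have hp : Fin.cons (p 0) (fun i => p i.succ) = p := Fin.cons_self_tail p
    rwa [hp] at h2⟩

theorem mainComp (d m : ℕ) (ν : Measure ℝ) [IsProbabilityMeasure ν] :
    ∀ (k : ℕ) (t : ℝ),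
      (Measure.pi fun _ : TTy d m k => ν)
          {x | ∀ p : Fin k → Fin m → Fin d × Bool, treeE' d m k p x ≤ t}
        ≤ (Measure.pi fun _ : PPy d m (k*m) k => ν)
          {x | ∀ p : Fin k → Fin m → Fin d × Bool, polyE d m (k*m) k 0 p x ≤ t} := by
  intro k
  induction k with
  | zero =>
    intro t
    by_cases h : (0:ℝ) ≤ t
    · have e2 : {x : PPy d m (0*m) 0 → ℝ |
          ∀ p : Fin 0 → Fin m → Fin d × Bool, polyE d m (0*m) 0 0 p x ≤ t} = Set.univ := by
        ext x
        simp only [Set.mem_setOf_eq, Set.mem_univ, iff_true]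
        intro p; exact h
      rw [e2, measure_univ]
      exact prob_le_one
    · have e1 : {x : TTy d m 0 → ℝ |
          ∀ p : Fin 0 → Fin m → Fin d × Bool, treeE' d m 0 p x ≤ t} = ∅ := by
        ext x
        simp only [Set.mem_setOf_eq, Set.mem_empty_iff_false, iff_false]
        intro hx
        exact h (hx (fun i => i.elim0))
      rw [e1]
      simp
  | succ k IH =>
    intro t
    classical
    -- the polymer event as a product-space event
    set SP : Set ((Fin m × BoxT d ((k+1)*m) → ℝ) × (PPy d m ((k+1)*m) k → ℝ)) :=
      {r | ∀ (b : Fin m → Fin d × Bool) (q : Fin k → Fin m → Fin d × Bool),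
        fstE d m ((k+1)*m) b r.1 + polyE d m ((k+1)*m) k (pos b m) q r.2 ≤ t} with hSPdef
    have hSPmeas : MeasurableSet SP := by
      have : SP = ⋂ (b : Fin m → Fin d × Bool), ⋂ (q : Fin k → Fin m → Fin d × Bool),
          {r : (Fin m × BoxT d ((k+1)*m) → ℝ) × (PPy d m ((k+1)*m) k → ℝ) |
            fstE d m ((k+1)*m) b r.1 + polyE d m ((k+1)*m) k (pos b m) q r.2 ≤ t} := by
        ext r; simp only [hSPdef, Set.mem_setOf_eq, Set.mem_iInter]
      rw [this]
      refine MeasurableSet.iInter fun b => MeasurableSet.iInter fun q => ?_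
      exact measurableSet_le
        (((fstE_meas d m _ b).comp measurable_fst).add
          ((polyE_measurable d m _ k _ q).comp measurable_snd)) measurable_const
    -- the tree event as a product-space event
    set ST : Set ((Fin m × BoxT d m → ℝ) × (BoxT d m × TTy d m k → ℝ)) :=
      {r | ∀ (b : Fin m → Fin d × Bool) (q : Fin k → Fin m → Fin d × Bool),
        fstE d m m b r.1
          + treeE' d m k q (fun v => r.2 (clampBox d m (pos b m), v)) ≤ t} with hSTdef
    have hSTmeas : MeasurableSet ST := by
      have : ST = ⋂ (b : Fin m → Fin d × Bool), ⋂ (q : Fin k → Fin m → Fin d × Bool),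
          {r : (Fin m × BoxT d m → ℝ) × (BoxT d m × TTy d m k → ℝ) |
            fstE d m m b r.1
              + treeE' d m k q (fun v => r.2 (clampBox d m (pos b m), v)) ≤ t} := by
        ext r; simp only [hSTdef, Set.mem_setOf_eq, Set.mem_iInter]
      rw [this]
      refine MeasurableSet.iInter fun b => MeasurableSet.iInter fun q => ?_
      refine measurableSet_le (Measurable.add ?_ ?_) measurable_const
      · exact (fstE_meas d m m b).comp measurable_fst
      · exact (treeE'_measurable d m k q).comp
          (measurable_pi_lambda _ fun v => (measurable_pi_apply _).comp measurable_snd)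
    -- identification of the polymer probability
    have hpoly : (Measure.pi fun _ : PPy d m ((k+1)*m) (k+1) => ν)
        {x | ∀ p : Fin (k+1) → Fin m → Fin d × Bool, polyE d m ((k+1)*m) (k+1) 0 p x ≤ t}
        = ((Measure.pi fun _ : Fin m × BoxT d ((k+1)*m) => ν).prod
            (Measure.pi fun _ : PPy d m ((k+1)*m) k => ν)) SP := by
      have hpre : {x : PPy d m ((k+1)*m) (k+1) → ℝ |
          ∀ p : Fin (k+1) → Fin m → Fin d × Bool, polyE d m ((k+1)*m) (k+1) 0 p x ≤ t}
          = (MeasurableEquiv.sumPiEquivProdPi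
              (fun _ : (Fin m × BoxT d ((k+1)*m)) ⊕ PPy d m ((k+1)*m) k => ℝ)) ⁻¹' SP := by
        ext x
        simp only [Set.mem_setOf_eq, Set.mem_preimage, hSPdef]
        rw [forall_cons_path]
        refine forall₂_congr fun b q => ?_
        rw [polyE_cons]
        exact Iff.rfl
      rw [hpre]
      exact (measurePreserving_sumPiEquivProdPi
        (fun _ : (Fin m × BoxT d ((k+1)*m)) ⊕ PPy d m ((k+1)*m) k => ν)).measure_preimage
        hSPmeas.nullMeasurableSet
    -- identification of the tree probability
    have htree : (Measure.pi fun _ : TTy d m (k+1) => ν)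
        {x | ∀ p : Fin (k+1) → Fin m → Fin d × Bool, treeE' d m (k+1) p x ≤ t}
        = ((Measure.pi fun _ : Fin m × BoxT d m => ν).prod
            (Measure.pi fun _ : BoxT d m × TTy d m k => ν)) ST := by
      have hpre : {x : TTy d m (k+1) → ℝ |
          ∀ p : Fin (k+1) → Fin m → Fin d × Bool, treeE' d m (k+1) p x ≤ t}
          = (MeasurableEquiv.sumPiEquivProdPi
              (fun _ : (Fin m × BoxT d m) ⊕ (BoxT d m × TTy d m k) => ℝ)) ⁻¹' ST := by
        ext x
        simp only [Set.mem_setOf_eq, Set.mem_preimage, hSTdef]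
        rw [forall_cons_path]
        refine forall₂_congr fun b q => ?_
        rw [treeE'_cons]
        exact Iff.rfl
      rw [hpre]
      exact (measurePreserving_sumPiEquivProdPi
        (fun _ : (Fin m × BoxT d m) ⊕ (BoxT d m × TTy d m k) => ν)).measure_preimage
        hSTmeas.nullMeasurableSet
    -- per-endpoint event on the tree side
    set CT : (Fin m × BoxT d m → ℝ) → BoxT d m → Set (TTy d m k → ℝ) :=
      fun e' z => {w | ∀ b : Fin m → Fin d × Bool, clampBox d m (pos b m) = z →
        ∀ q : Fin k → Fin m → Fin d × Bool, fstE d m m b e' + treeE' d m k q w ≤ t} with hCTdef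
    have hCTmeas : ∀ e' z, MeasurableSet (CT e' z) := by
      intro e' z
      have : CT e' z = ⋂ (b : Fin m → Fin d × Bool), ⋂ (_ : clampBox d m (pos b m) = z),
          ⋂ (q : Fin k → Fin m → Fin d × Bool),
          {w | fstE d m m b e' + treeE' d m k q w ≤ t} := by
        ext w; simp only [hCTdef, Set.mem_setOf_eq, Set.mem_iInter]
      rw [this]
      refine MeasurableSet.iInter fun b => MeasurableSet.iInter fun _ =>
        MeasurableSet.iInter fun q => ?_
      exact measurableSet_le (measurable_const.add (treeE'_measurable d m k q))
        measurable_const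
    -- per-endpoint event on the (translated) polymer side
    set CPm : (Fin m × BoxT d m → ℝ) → BoxT d m → Set (PPy d m (k*m) k → ℝ) :=
      fun e' z => {y | ∀ b : Fin m → Fin d × Bool, clampBox d m (pos b m) = z →
        ∀ q : Fin k → Fin m → Fin d × Bool,
          fstE d m m b e' + polyE d m (k*m) k 0 q y ≤ t} with hCPmdef
    have hCPmmeas : ∀ e' z, MeasurableSet (CPm e' z) := by
      intro e' z
      have : CPm e' z = ⋂ (b : Fin m → Fin d × Bool), ⋂ (_ : clampBox d m (pos b m) = z),
          ⋂ (q : Fin k → Fin m → Fin d × Bool),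
          {y | fstE d m m b e' + polyE d m (k*m) k 0 q y ≤ t} := by
        ext y; simp only [hCPmdef, Set.mem_setOf_eq, Set.mem_iInter]
      rw [this]
      refine MeasurableSet.iInter fun b => MeasurableSet.iInter fun _ =>
        MeasurableSet.iInter fun q => ?_
      exact measurableSet_le (measurable_const.add (polyE_measurable d m _ k _ q))
        measurable_const
    -- inner comparison using the induction hypothesis
    have hcomp : ∀ (e' : Fin m × BoxT d m → ℝ) (z : BoxT d m),
        (Measure.pi fun _ : TTy d m k => ν) (CT e' z)
          ≤ (Measure.pi fun _ : PPy d m (k*m) k => ν) (CPm e' z) := by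
      intro e' z
      rcases (Finset.univ.filter
          (fun b : Fin m → Fin d × Bool => clampBox d m (pos b m) = z)).eq_empty_or_nonempty
        with hF | hF
      · have hnob : ∀ b : Fin m → Fin d × Bool, clampBox d m (pos b m) = z → False := by
          intro b hb
          have : b ∈ Finset.univ.filter
              (fun b : Fin m → Fin d × Bool => clampBox d m (pos b m) = z) :=
            Finset.mem_filter.2 ⟨Finset.mem_univ _, hb⟩
          rw [hF] at this
          exact absurd this (Finset.notMem_empty _)
        have h1 : CT e' z = Set.univ := by
          ext w
          simp only [hCTdef, Set.mem_setOf_eq, Set.mem_univ, iff_true]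
          intro b hb q
          exact absurd hb (fun h => hnob b h)
        have h2 : CPm e' z = Set.univ := by
          ext y
          simp only [hCPmdef, Set.mem_setOf_eq, Set.mem_univ, iff_true]
          intro b hb q
          exact absurd hb (fun h => hnob b h)
        rw [h1, h2, measure_univ, measure_univ]
      · set F := Finset.univ.filter
          (fun b : Fin m → Fin d × Bool => clampBox d m (pos b m) = z) with hFdef
        set c := F.inf' hF (fun b => t - fstE d m m b e') with hcdef
        have hCT : CT e' z = {w | ∀ q : Fin k → Fin m → Fin d × Bool,
            treeE' d m k q w ≤ c} := by
          ext w
          simp only [hCTdef, Set.mem_setOf_eq]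
          constructor
          · intro h q
            refine Finset.le_inf' hF _ fun b hbF => ?_
            have hb : clampBox d m (pos b m) = z := (Finset.mem_filter.1 hbF).2
            have := h b hb q
            linarith
          · intro h b hb q
            have hbF : b ∈ F := Finset.mem_filter.2 ⟨Finset.mem_univ _, hb⟩
            have h2 := h q
            have h3 : c ≤ t - fstE d m m b e' := Finset.inf'_le _ hbF
            linarith
        have hCP : CPm e' z = {y | ∀ q : Fin k → Fin m → Fin d × Bool,
            polyE d m (k*m) k 0 q y ≤ c} := by
          ext y
          simp only [hCPmdef, Set.mem_setOf_eq]
          constructor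
          · intro h q
            refine Finset.le_inf' hF _ fun b hbF => ?_
            have hb : clampBox d m (pos b m) = z := (Finset.mem_filter.1 hbF).2
            have := h b hb q
            linarith
          · intro h b hb q
            have hbF : b ∈ F := Finset.mem_filter.2 ⟨Finset.mem_univ _, hb⟩
            have h2 := h q
            have h3 : c ≤ t - fstE d m m b e' := Finset.inf'_le _ hbF
            linarith
        rw [hCT, hCP]
        exact IH c
    -- the per-endpoint polymer events in the untranslated coordinates
    set A : (Fin m × BoxT d ((k+1)*m) → ℝ) → BoxT d m → Set (PPy d m ((k+1)*m) k → ℝ) :=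
      fun e z => {y | ∀ b : Fin m → Fin d × Bool, clampBox d m (pos b m) = z →
        ∀ q : Fin k → Fin m → Fin d × Bool,
          fstE d m ((k+1)*m) b e + polyE d m ((k+1)*m) k (pos b m) q y ≤ t} with hAdef
    have hAmeas : ∀ e z, MeasurableSet (A e z) := by
      intro e z
      have : A e z = ⋂ (b : Fin m → Fin d × Bool), ⋂ (_ : clampBox d m (pos b m) = z),
          ⋂ (q : Fin k → Fin m → Fin d × Bool),
          {y | fstE d m ((k+1)*m) b e + polyE d m ((k+1)*m) k (pos b m) q y ≤ t} := by
        ext y; simp only [hAdef, Set.mem_setOf_eq, Set.mem_iInter]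
      rw [this]
      refine MeasurableSet.iInter fun b => MeasurableSet.iInter fun _ =>
        MeasurableSet.iInter fun q => ?_
      exact measurableSet_le (measurable_const.add (polyE_measurable d m _ k _ q))
        measurable_const
    have hAdec : ∀ e z, ∀ ⦃x y : PPy d m ((k+1)*m) k → ℝ⦄, x ≤ y → y ∈ A e z → x ∈ A e z := by
      intro e z x y hxy hy b hb q
      have h1 := hy b hb q
      have h2 := polyE_mono d m ((k+1)*m) k (pos b m) q hxy
      linarith
    -- slices of SP
    have hslice : ∀ e : Fin m × BoxT d ((k+1)*m) → ℝ,
        Prod.mk e ⁻¹' SP = ⋂ z ∈ (Finset.univ : Finset (BoxT d m)), A e z := by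
      intro e
      ext y
      simp only [Set.mem_preimage, hSPdef, hAdef, Set.mem_setOf_eq, Set.mem_iInter]
      constructor
      · intro h z _ b hb q
        exact h b q
      · intro h b q
        exact h (clampBox d m (pos b m)) (Finset.mem_univ _) b rfl q
    -- slices of ST
    have hslice' : ∀ e' : Fin m × BoxT d m → ℝ,
        Prod.mk e' ⁻¹' ST
          = ⋂ z : BoxT d m, {y : BoxT d m × TTy d m k → ℝ | (fun v => y (z, v)) ∈ CT e' z} := by
      intro e'
      ext y
      simp only [Set.mem_preimage, hSTdef, hCTdef, Set.mem_setOf_eq, Set.mem_iInter]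
      constructor
      · intro h z b hb q
        rw [← hb]
        exact h b q
      · intro h b q
        exact h (clampBox d m (pos b m)) b rfl q
    -- translation: A-measure equals CPm-measure
    have hAeq : ∀ (e : Fin m × BoxT d ((k+1)*m) → ℝ) (z : BoxT d m),
        (Measure.pi fun _ : PPy d m ((k+1)*m) k => ν) (A e z)
          = (Measure.pi fun _ : PPy d m (k*m) k => ν)
              (CPm (fun u => e (u.1, clampBox d ((k+1)*m) (bval u.2))) z) := by
      intro e z
      have hzb : ∀ j, |bval z j| + ((k*m : ℕ):ℤ) ≤ (((k+1)*m : ℕ):ℤ) := by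
        intro j
        have h1 := bval_abs_le z j
        push_cast
        push_cast at h1
        nlinarith
      have hApre : A e z = (fun y => y ∘ shiftP d m (k*m) ((k+1)*m) (bval z) k) ⁻¹'
          (CPm (fun u => e (u.1, clampBox d ((k+1)*m) (bval u.2))) z) := by
        ext y
        simp only [hAdef, hCPmdef, Set.mem_preimage, Set.mem_setOf_eq]
        refine forall_congr' fun b => ?_
        refine imp_congr_right fun hb => ?_
        refine forall_congr' fun q => ?_
        have hposz : pos b m = bval z := by
          rw [← hb, bval_clampBox (fun jj => pos_abs_le_gen b m m le_rfl jj)]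
        have hshift := polyE_shift d m ((k+1)*m) (k*m) (bval z) k 0 q y
          (fun jj => by simp)
        rw [add_zero] at hshift
        rw [hposz, hshift, fstE_comp d m ((k+1)*m) (by nlinarith) b e]
      rw [hApre]
      exact pi_comp_apply (ν := ν) _ (shiftP_injective d m (k*m) ((k+1)*m) (bval z) hzb k)
        (hCPmmeas _ z)
    -- measurability of the per-slice tree product
    have hCTz_meas : ∀ z : BoxT d m, Measurable (fun e' : Fin m × BoxT d m → ℝ =>
        (Measure.pi fun _ : TTy d m k => ν) (CT e' z)) := by
      intro z
      have hSmeas : MeasurableSet {r : (Fin m × BoxT d m → ℝ) × (TTy d m k → ℝ) |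
          ∀ b : Fin m → Fin d × Bool, clampBox d m (pos b m) = z →
          ∀ q : Fin k → Fin m → Fin d × Bool,
            fstE d m m b r.1 + treeE' d m k q r.2 ≤ t} := by
        have : {r : (Fin m × BoxT d m → ℝ) × (TTy d m k → ℝ) |
            ∀ b : Fin m → Fin d × Bool, clampBox d m (pos b m) = z →
            ∀ q : Fin k → Fin m → Fin d × Bool,
              fstE d m m b r.1 + treeE' d m k q r.2 ≤ t}
            = ⋂ (b : Fin m → Fin d × Bool), ⋂ (_ : clampBox d m (pos b m) = z),
              ⋂ (q : Fin k → Fin m → Fin d × Bool),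
              {r : (Fin m × BoxT d m → ℝ) × (TTy d m k → ℝ) |
                fstE d m m b r.1 + treeE' d m k q r.2 ≤ t} := by
          ext r; simp only [Set.mem_setOf_eq, Set.mem_iInter]
        rw [this]
        refine MeasurableSet.iInter fun b => MeasurableSet.iInter fun _ =>
          MeasurableSet.iInter fun q => ?_
        exact measurableSet_le
          (((fstE_meas d m m b).comp measurable_fst).add
            ((treeE'_measurable d m k q).comp measurable_snd)) measurable_const
      have : (fun e' : Fin m × BoxT d m → ℝ =>
          (Measure.pi fun _ : TTy d m k => ν) (CT e' z))
          = fun e' => (Measure.pi fun _ : TTy d m k => ν)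
              (Prod.mk e' ⁻¹' {r : (Fin m × BoxT d m → ℝ) × (TTy d m k → ℝ) |
                ∀ b : Fin m → Fin d × Bool, clampBox d m (pos b m) = z →
                ∀ q : Fin k → Fin m → Fin d × Bool,
                  fstE d m m b r.1 + treeE' d m k q r.2 ≤ t}) := by
        funext e'
        congr 1
      rw [this]
      exact measurable_measure_prodMk_left hSmeas
    -- pointwise comparison of the integrands
    have hpoint : ∀ e : Fin m × BoxT d ((k+1)*m) → ℝ,
        ∏ z : BoxT d m, (Measure.pi fun _ : TTy d m k => ν)
            (CT (fun u => e (u.1, clampBox d ((k+1)*m) (bval u.2))) z)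
          ≤ (Measure.pi fun _ : PPy d m ((k+1)*m) k => ν) (Prod.mk e ⁻¹' SP) := by
      intro e
      calc ∏ z : BoxT d m, (Measure.pi fun _ : TTy d m k => ν)
            (CT (fun u => e (u.1, clampBox d ((k+1)*m) (bval u.2))) z)
          ≤ ∏ z : BoxT d m, (Measure.pi fun _ : PPy d m ((k+1)*m) k => ν) (A e z) := by
            refine Finset.prod_le_prod' fun z _ => ?_
            rw [hAeq e z]
            exact hcomp _ z
        _ ≤ (Measure.pi fun _ : PPy d m ((k+1)*m) k => ν)
              (⋂ z ∈ (Finset.univ : Finset (BoxT d m)), A e z) :=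
            harris_sets ν Finset.univ (A e) (hAmeas e) (hAdec e)
        _ = (Measure.pi fun _ : PPy d m ((k+1)*m) k => ν) (Prod.mk e ⁻¹' SP) := by
            rw [hslice e]
    -- assembling the tree side as an integral
    have htreeint : ((Measure.pi fun _ : Fin m × BoxT d m => ν).prod
          (Measure.pi fun _ : BoxT d m × TTy d m k => ν)) ST
        = ∫⁻ e', ∏ z : BoxT d m, (Measure.pi fun _ : TTy d m k => ν) (CT e' z)
            ∂(Measure.pi fun _ : Fin m × BoxT d m => ν) := by
      rw [Measure.prod_apply hSTmeas]
      refine lintegral_congr fun e' => ?_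
      rw [hslice' e']
      exact pi_prod_blocks (ν := ν) (CT e') (fun z => hCTmeas e' z)
    -- assembling the polymer side as an integral
    have hpolyint : ((Measure.pi fun _ : Fin m × BoxT d ((k+1)*m) => ν).prod
          (Measure.pi fun _ : PPy d m ((k+1)*m) k => ν)) SP
        = ∫⁻ e, (Measure.pi fun _ : PPy d m ((k+1)*m) k => ν) (Prod.mk e ⁻¹' SP)
            ∂(Measure.pi fun _ : Fin m × BoxT d ((k+1)*m) => ν) :=
      Measure.prod_apply hSPmeas
    -- the change of variables for the first-block integral
    have hf₀inj : Function.Injective (fun u : Fin m × BoxT d m =>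
        ((u.1, clampBox d ((k+1)*m) (bval u.2)) : Fin m × BoxT d ((k+1)*m))) := by
      intro u u' h
      have h' : ((u.1, clampBox d ((k+1)*m) (bval u.2)) : Fin m × BoxT d ((k+1)*m))
          = (u'.1, clampBox d ((k+1)*m) (bval u'.2)) := h
      have h1 : u.1 = u'.1 := (Prod.ext_iff.1 h').1
      have h2 : clampBox d ((k+1)*m) (bval u.2) = clampBox d ((k+1)*m) (bval u'.2) :=
        (Prod.ext_iff.1 h').2
      have hnoop : ∀ y : BoxT d m, bval (clampBox d ((k+1)*m) (bval y)) = bval y := by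
        intro y
        refine bval_clampBox fun jj => ?_
        have := bval_abs_le y jj
        push_cast
        push_cast at this
        nlinarith
      have h3 : bval u.2 = bval u'.2 := by
        rw [← hnoop u.2, ← hnoop u'.2, h2]
      exact Prod.ext h1 (bval_injective h3)
    have hGmeas : Measurable (fun e' : Fin m × BoxT d m → ℝ =>
        ∏ z : BoxT d m, (Measure.pi fun _ : TTy d m k => ν) (CT e' z)) :=
      Finset.measurable_prod _ fun z _ => hCTz_meas z
    have hchange : ∫⁻ e', ∏ z : BoxT d m, (Measure.pi fun _ : TTy d m k => ν) (CT e' z)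
          ∂(Measure.pi fun _ : Fin m × BoxT d m => ν)
        = ∫⁻ e, ∏ z : BoxT d m, (Measure.pi fun _ : TTy d m k => ν)
            (CT (fun u => e (u.1, clampBox d ((k+1)*m) (bval u.2))) z)
          ∂(Measure.pi fun _ : Fin m × BoxT d ((k+1)*m) => ν) :=
      (lintegral_comp_pi (ν := ν) _ hf₀inj hGmeas).symm
    -- final chain
    rw [htree, hpoly, htreeint, hpolyint, hchange]
    exact lintegral_mono fun e => hpoint e

end MainComp

section Glue

lemma toPT_surj (d m k : ℕ) (hm : 1 ≤ m) : Function.Surjective (toPT d m k) := by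
  intro p
  have hm0 : 0 < m := hm
  refine ⟨fun i => p ⟨(i:ℕ)/m, ?_⟩ ⟨(i:ℕ)%m, ?_⟩, ?_⟩
  · exact (Nat.div_lt_iff_lt_mul hm0).2 i.2
  · exact Nat.mod_lt _ hm0
  · funext l j
    show p ⟨((l:ℕ)*m + (j:ℕ))/m, _⟩ ⟨((l:ℕ)*m + (j:ℕ))%m, _⟩ = p l j
    have h1 : ((l:ℕ)*m + (j:ℕ))/m = (l:ℕ) := by
      rw [show (l:ℕ)*m = m*(l:ℕ) from mul_comm _ _, Nat.mul_add_div hm0,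
        Nat.div_eq_of_lt j.2, add_zero]
    have h2 : ((l:ℕ)*m + (j:ℕ))%m = (j:ℕ) := by
      rw [show (l:ℕ)*m = m*(l:ℕ) from mul_comm _ _, Nat.mul_add_mod, Nat.mod_eq_of_lt j.2]
    have hl : (⟨((l:ℕ)*m + (j:ℕ))/m, by omega⟩ : Fin k) = l := Fin.ext h1
    have hj : (⟨((l:ℕ)*m + (j:ℕ))%m, by omega⟩ : Fin m) = j := Fin.ext h2
    rw [hl, hj]

theorem gaussian_maxEnergy_stochOrder_aux
    {Ω : Type*} [MeasurableSpace Ω] (μ : Measure Ω) [IsProbabilityMeasure μ]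
    (d m k : ℕ) (hd : 1 ≤ d) (hm : 1 ≤ m)
    (env : ℕ × (Fin d → ℤ) → Ω → ℝ) (henv : IID μ env (gaussianReal 0 1))
    (envT : List (Fin d → ℤ) × ℕ × (Fin d → ℤ) → Ω → ℝ)
    (henvT : IID μ envT (gaussianReal 0 1)) (t : ℝ) :
      μ {o | t < ⨆ s : Fin (k*m) → Fin d × Bool, polymerEnergy (k*m) env s o}
        ≤ μ {o | t < ⨆ s : Fin (k*m) → Fin d × Bool, treeEnergy (k*m) m k envT s o} := by
  classical
  haveI hdne : Nonempty (Fin d) := ⟨⟨0, hd⟩⟩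
  haveI : Nonempty (Fin (k*m) → Fin d × Bool) := ⟨fun _ => (Classical.arbitrary _, true)⟩
  -- measurability of the energies
  have hPE : ∀ s : Fin (k*m) → Fin d × Bool,
      Measurable (fun o => polymerEnergy (k*m) env s o) := by
    intro s
    unfold polymerEnergy
    exact Finset.measurable_sum _ fun i _ => henv.1 _
  have hTE : ∀ s : Fin (k*m) → Fin d × Bool,
      Measurable (fun o => treeEnergy (k*m) m k envT s o) := by
    intro s
    unfold treeEnergy
    exact Finset.measurable_sum _ fun l _ => Finset.measurable_sum _ fun j _ => henvT.1 _
  -- "all energies small" events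
  set SetP : Set Ω :=
    {o | ∀ s : Fin (k*m) → Fin d × Bool, polymerEnergy (k*m) env s o ≤ t} with hSetPdef
  set SetT : Set Ω :=
    {o | ∀ s : Fin (k*m) → Fin d × Bool, treeEnergy (k*m) m k envT s o ≤ t} with hSetTdef
  have hSetPmeas : MeasurableSet SetP := by
    have : SetP = ⋂ s : Fin (k*m) → Fin d × Bool,
        {o | polymerEnergy (k*m) env s o ≤ t} := by
      ext o; simp only [hSetPdef, Set.mem_setOf_eq, Set.mem_iInter]
    rw [this]
    exact MeasurableSet.iInter fun s => measurableSet_le (hPE s) measurable_const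
  have hSetTmeas : MeasurableSet SetT := by
    have : SetT = ⋂ s : Fin (k*m) → Fin d × Bool,
        {o | treeEnergy (k*m) m k envT s o ≤ t} := by
      ext o; simp only [hSetTdef, Set.mem_setOf_eq, Set.mem_iInter]
    rw [this]
    exact MeasurableSet.iInter fun s => measurableSet_le (hTE s) measurable_const
  -- complements
  have hcomplP : {o | t < ⨆ s : Fin (k*m) → Fin d × Bool, polymerEnergy (k*m) env s o}
      = SetPᶜ := by
    ext o
    simp only [Set.mem_setOf_eq, Set.mem_compl_iff, hSetPdef]
    have hbdd : BddAbove (Set.range fun s : Fin (k*m) → Fin d × Bool =>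
        polymerEnergy (k*m) env s o) := (Set.finite_range _).bddAbove
    rw [lt_ciSup_iff hbdd]
    constructor
    · rintro ⟨s, hs⟩ hall
      exact absurd (hall s) (not_le.2 hs)
    · intro h
      push_neg at h
      obtain ⟨s, hs⟩ := h
      exact ⟨s, hs⟩
  have hcomplT : {o | t < ⨆ s : Fin (k*m) → Fin d × Bool, treeEnergy (k*m) m k envT s o}
      = SetTᶜ := by
    ext o
    simp only [Set.mem_setOf_eq, Set.mem_compl_iff, hSetTdef]
    have hbdd : BddAbove (Set.range fun s : Fin (k*m) → Fin d × Bool =>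
        treeEnergy (k*m) m k envT s o) := (Set.finite_range _).bddAbove
    rw [lt_ciSup_iff hbdd]
    constructor
    · rintro ⟨s, hs⟩ hall
      exact absurd (hall s) (not_le.2 hs)
    · intro h
      push_neg at h
      obtain ⟨s, hs⟩ := h
      exact ⟨s, hs⟩
  -- polymer event through the clean model
  set XP : Ω → (PPy d m (k*m) k → ℝ) := fun o a => env (rhoP d m (k*m) 0 k a) o with hXPdef
  have hXPmeas : Measurable XP := measurable_pi_lambda _ fun a => henv.1 _
  set EPc : Set (PPy d m (k*m) k → ℝ) :=
    {x | ∀ p : Fin k → Fin m → Fin d × Bool, polyE d m (k*m) k 0 p x ≤ t} with hEPcdef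
  have hEPcmeas : MeasurableSet EPc := by
    have : EPc = ⋂ p : Fin k → Fin m → Fin d × Bool,
        {x | polyE d m (k*m) k 0 p x ≤ t} := by
      ext x; simp only [hEPcdef, Set.mem_setOf_eq, Set.mem_iInter]
    rw [this]
    exact MeasurableSet.iInter fun p =>
      measurableSet_le (polyE_measurable d m _ k _ p) measurable_const
  have hkeyP : ∀ (s : Fin (k*m) → Fin d × Bool) (o : Ω),
      polymerEnergy (k*m) env s o = polyE d m (k*m) k 0 (toPT d m k s) (XP o) := by
    intro s o
    have hz : ∀ jj : Fin d, |(0 : Fin d → ℤ) jj| + ((k*m : ℕ):ℤ) ≤ ((k*m : ℕ):ℤ) := by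
      intro jj; simp
    have := linkP d m (k*m) k 0 0 hz s (fun pr => env pr o)
    simp only [zero_add] at this
    rw [hXPdef]
    rw [this]
    rfl
  have hEventP : SetP = XP ⁻¹' EPc := by
    ext o
    simp only [hSetPdef, hEPcdef, Set.mem_setOf_eq, Set.mem_preimage]
    constructor
    · intro h p
      obtain ⟨s, rfl⟩ := toPT_surj d m k hm p
      rw [← hkeyP s o]
      exact h s
    · intro h s
      rw [hkeyP s o]
      exact h (toPT d m k s)
  have hmapP : μ.map XP = Measure.pi (fun _ : PPy d m (k*m) k => gaussianReal 0 1) :=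
    map_iid_pi μ env henv (rhoP d m (k*m) 0 k)
      (fun a b h => rhoP_injective d m (k*m) k 0 a b h)
  have hmuP : μ SetP = (Measure.pi (fun _ : PPy d m (k*m) k => gaussianReal 0 1)) EPc := by
    rw [hEventP, ← hmapP, Measure.map_apply hXPmeas hEPcmeas]
  -- tree event through the clean model
  set XT : Ω → (TTy d m k → ℝ) := fun o a => envT (rhoT d m k a) o with hXTdef
  have hXTmeas : Measurable XT := measurable_pi_lambda _ fun a => henvT.1 _
  set ETc : Set (TTy d m k → ℝ) :=
    {x | ∀ p : Fin k → Fin m → Fin d × Bool, treeE' d m k p x ≤ t} with hETcdef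
  have hETcmeas : MeasurableSet ETc := by
    have : ETc = ⋂ p : Fin k → Fin m → Fin d × Bool,
        {x | treeE' d m k p x ≤ t} := by
      ext x; simp only [hETcdef, Set.mem_setOf_eq, Set.mem_iInter]
    rw [this]
    exact MeasurableSet.iInter fun p =>
      measurableSet_le (treeE'_measurable d m k p) measurable_const
  have hkeyT : ∀ (s : Fin (k*m) → Fin d × Bool) (o : Ω),
      treeEnergy (k*m) m k envT s o = treeE' d m k (toPT d m k s) (XT o) := by
    intro s o
    have := linkT d m k s (fun pr => envT pr o)
    rw [hXTdef, this]
    rfl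
  have hEventT : SetT = XT ⁻¹' ETc := by
    ext o
    simp only [hSetTdef, hETcdef, Set.mem_setOf_eq, Set.mem_preimage]
    constructor
    · intro h p
      obtain ⟨s, rfl⟩ := toPT_surj d m k hm p
      rw [← hkeyT s o]
      exact h s
    · intro h s
      rw [hkeyT s o]
      exact h (toPT d m k s)
  have hmapT : μ.map XT = Measure.pi (fun _ : TTy d m k => gaussianReal 0 1) :=
    map_iid_pi μ envT henvT (rhoT d m k)
      (fun a b h => rhoT_injective d m k a b h)
  have hmuT : μ SetT = (Measure.pi (fun _ : TTy d m k => gaussianReal 0 1)) ETc := by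
    rw [hEventT, ← hmapT, Measure.map_apply hXTmeas hETcmeas]
  -- conclusion via the main comparison
  have hmain := mainComp d m (gaussianReal 0 1) k t
  have hle : μ SetT ≤ μ SetP := by
    rw [hmuT, hmuP]
    exact hmain
  rw [hcomplP, hcomplT, prob_compl_eq_one_sub hSetPmeas, prob_compl_eq_one_sub hSetTmeas]
  exact tsub_le_tsub_left hle 1

end Glue

/-- For `d, m ≥ 1` and `n = k m`, if the environment variables and the
`m`-tree environment copies are i.i.d. standard Gaussians, then the maximal polymer energy
is stochastically dominated by the maximal `m`-tree energy:
`ℙ(max_{x∈Π_n} H_n(x) > t) ≤ ℙ(max_{x∈Π_n} H_n^{m-tree}(x) > t)` for every `t ∈ ℝ`. -/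
theorem gaussian_maxEnergy_stochOrder
    {Ω : Type*} [MeasurableSpace Ω] (μ : Measure Ω) [IsProbabilityMeasure μ]
    (d m k : ℕ) (hd : 1 ≤ d) (hm : 1 ≤ m) (hk : 1 ≤ k) (n : ℕ) (hn : n = k * m)
    (env : ℕ × (Fin d → ℤ) → Ω → ℝ) (henv : IID μ env (gaussianReal 0 1))
    (envT : List (Fin d → ℤ) × ℕ × (Fin d → ℤ) → Ω → ℝ)
    (henvT : IID μ envT (gaussianReal 0 1)) :
    ∀ t : ℝ,
      μ {o | t < ⨆ s : Fin n → Fin d × Bool, polymerEnergy n env s o}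
        ≤ μ {o | t < ⨆ s : Fin n → Fin d × Bool, treeEnergy n m k envT s o} := by
  intro t
  subst hn
  exact gaussian_maxEnergy_stochOrder_aux μ d m k hd hm env henv envT henvT t
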